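/- arXiv:2009.12707 — 4 statements merged into one kernel-verified Lean document; each statement's English description precedes it below -/
import Mathlib

section
/- A closed subspace M of L²(𝕋) satisfies SM = M, where S is multiplication by e^{it}, if and only if M = χ_E · L²(𝕋) for some measurable set E ⊆ 𝕋; moreover E is unique up to a set of measure zero. -/
open MeasureTheory AddCircle
open scoped ENNReal symmDiff

instance : Fact (0 < 2 * Real.pi) := ⟨by positivity⟩

local notation "μ" => @haarAddCircle (2 * Real.pi) _

namespace Stmt4Aux

open Complex Submodule

local notation "𝕋" => AddCircle (2 * Real.pi)

/-- membership of `fourier n * f` in L². -/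
lemma memℒp_fourier_mul (n : ℤ) (f : Lp ℂ 2 μ) :
    MemLp (fun x => (fourier n x) * f x) 2 μ := by
  refine MemLp.of_le (Lp.memLp f)
    (((fourier n).continuous.aestronglyMeasurable).mul (Lp.aestronglyMeasurable f)) ?_
  filter_upwards with x
  rw [norm_mul]
  simp [Circle.norm_coe]

lemma ofReal_max_zero (a : ℝ) : ENNReal.ofReal (max a 0) = ENNReal.ofReal a := by
  rcases le_total a 0 with h | h
  · simp [max_eq_right h, ENNReal.ofReal_eq_zero.mpr h]
  · simp [max_eq_left h]

lemma eq_zero_of_ofReal_eq (a : ℝ) (h : ENNReal.ofReal a = ENNReal.ofReal (-a)) : a = 0 := by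
  rcases lt_trichotomy a 0 with h' | h' | h'
  · have h1 : ENNReal.ofReal a = 0 := ENNReal.ofReal_eq_zero.mpr h'.le
    have h2 : 0 < ENNReal.ofReal (-a) := ENNReal.ofReal_pos.mpr (by linarith)
    rw [h1] at h; exact absurd h.symm h2.ne'
  · exact h'
  · have h1 : ENNReal.ofReal (-a) = 0 := ENNReal.ofReal_eq_zero.mpr (by linarith)
    have h2 : 0 < ENNReal.ofReal a := ENNReal.ofReal_pos.mpr h'
    rw [h1] at h; exact absurd h h2.ne'

/-- A real integrable function all of whose integrals against continuous functions vanish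
is a.e. zero. -/
lemma real_ae_zero (u : 𝕋 → ℝ) (hu : Integrable u μ)
    (h : ∀ ψ : C(𝕋, ℝ), ∫ x, ψ x * u x ∂μ = 0) : u =ᵐ[μ] 0 := by
  set u' := hu.1.mk u with hu'def
  have hmk : u =ᵐ[μ] u' := hu.1.ae_eq_mk
  have hu'm : StronglyMeasurable u' := hu.1.stronglyMeasurable_mk
  have hu' : Integrable u' μ := hu.congr hmk
  have h' : ∀ ψ : C(𝕋, ℝ), ∫ x, ψ x * u' x ∂μ = 0 := by
    intro ψ
    rw [← h ψ]
    exact integral_congr_ae (hmk.mono fun x hx => by rw [hx]) |>.symm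
  suffices hs : u' =ᵐ[μ] 0 from hmk.trans hs
  set d1 : 𝕋 → ℝ≥0∞ := fun x => ENNReal.ofReal (u' x) with hd1
  set d2 : 𝕋 → ℝ≥0∞ := fun x => ENNReal.ofReal (-u' x) with hd2
  have hm1 : Measurable d1 := ENNReal.measurable_ofReal.comp hu'm.measurable
  have hm2 : Measurable d2 := ENNReal.measurable_ofReal.comp hu'm.measurable.neg
  have hfin : ∀ (v : 𝕋 → ℝ), Integrable v μ →
      ∫⁻ x, ENNReal.ofReal (v x) ∂μ ≠ ∞ := by
    intro v hv
    refine (lt_of_le_of_lt (lintegral_mono fun x => ?_) hv.2).ne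
    calc ENNReal.ofReal (v x) ≤ ENNReal.ofReal ‖v x‖ :=
          ENNReal.ofReal_le_ofReal (by rw [Real.norm_eq_abs]; exact le_abs_self _)
    _ = (‖v x‖₊ : ℝ≥0∞) := ofReal_norm _
  have hfin1 : ∫⁻ x, d1 x ∂μ ≠ ∞ := hfin u' hu'
  have hfin2 : ∫⁻ x, d2 x ∂μ ≠ ∞ := hfin _ hu'.neg
  have hkey : Measure.withDensity μ d1 = Measure.withDensity μ d2 := by
    have i1 : IsFiniteMeasure (Measure.withDensity μ d1) := isFiniteMeasure_withDensity hfin1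
    have i2 : IsFiniteMeasure (Measure.withDensity μ d2) := isFiniteMeasure_withDensity hfin2
    apply ext_of_forall_lintegral_eq_of_IsFiniteMeasure
    intro f
    have hfm : Measurable fun x => (f x : ℝ≥0∞) :=
      (ENNReal.continuous_coe.comp f.continuous).measurable
    rw [lintegral_withDensity_eq_lintegral_mul μ hm1 hfm,
        lintegral_withDensity_eq_lintegral_mul μ hm2 hfm]
    set ψ : C(𝕋, ℝ) := ⟨fun x => (f x : ℝ), NNReal.continuous_coe.comp f.continuous⟩ with hψ
    have hψb : ∀ x, ‖ψ x‖ ≤ ‖BoundedContinuousFunction.mkOfCompact ψ‖ := fun x =>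
      (BoundedContinuousFunction.mkOfCompact ψ).norm_coe_le_norm x
    have hint1 : Integrable (fun x => ψ x * max (u' x) 0) μ :=
      hu'.pos_part.bdd_mul ψ.continuous.aestronglyMeasurable (Filter.Eventually.of_forall hψb)
    have hint2 : Integrable (fun x => ψ x * max (-u' x) 0) μ :=
      hu'.neg.pos_part.bdd_mul ψ.continuous.aestronglyMeasurable (Filter.Eventually.of_forall hψb)
    have hsub : ∫ x, ψ x * max (u' x) 0 ∂μ = ∫ x, ψ x * max (-u' x) 0 ∂μ := by
      have hdiff : ∫ x, (ψ x * max (u' x) 0 - ψ x * max (-u' x) 0) ∂μ = 0 := by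
        calc ∫ x, (ψ x * max (u' x) 0 - ψ x * max (-u' x) 0) ∂μ
            = ∫ x, ψ x * u' x ∂μ := by
              apply integral_congr_ae
              filter_upwards with x
              rcases le_total (u' x) 0 with hx | hx
              · rw [max_eq_right hx, max_eq_left (by linarith)]; ring
              · rw [max_eq_left hx, max_eq_right (by linarith)]; ring
          _ = 0 := h' ψ
      rw [integral_sub hint1 hint2] at hdiff
      linarith
    have conv : ∀ (v : 𝕋 → ℝ), Integrable (fun x => ψ x * max (v x) 0) μ →
        ∫⁻ x, (fun y => ENNReal.ofReal (v y)) x * (f x : ℝ≥0∞) ∂μ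
          = ENNReal.ofReal (∫ x, ψ x * max (v x) 0 ∂μ) := by
      intro v hv
      rw [ofReal_integral_eq_lintegral_ofReal hv
        (Filter.Eventually.of_forall fun x => mul_nonneg (f x).coe_nonneg (le_max_right _ _))]
      apply lintegral_congr
      intro x
      simp only [hψ, ContinuousMap.coe_mk]
      rw [ENNReal.ofReal_mul (f x).coe_nonneg, ofReal_max_zero, ENNReal.ofReal_coe_nnreal,
        mul_comm]
    calc ∫⁻ x, (d1 * fun x => (f x : ℝ≥0∞)) x ∂μ
        = ENNReal.ofReal (∫ x, ψ x * max (u' x) 0 ∂μ) := conv u' hint1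
      _ = ENNReal.ofReal (∫ x, ψ x * max (-u' x) 0 ∂μ) := by rw [hsub]
      _ = ∫⁻ x, (d2 * fun x => (f x : ℝ≥0∞)) x ∂μ := (conv (fun x => -u' x) hint2).symm
  rw [withDensity_eq_iff hm1.aemeasurable hm2.aemeasurable hfin1] at hkey
  filter_upwards [hkey] with x hx
  exact eq_zero_of_ofReal_eq _ hx

/-- An integrable function on the circle with vanishing integrals against all continuous
functions is a.e. zero. -/
lemma ae_zero_of_integral_continuous (w : 𝕋 → ℂ) (hw : Integrable w μ)
    (h : ∀ φ : C(𝕋, ℂ), ∫ x, φ x * w x ∂μ = 0) : w =ᵐ[μ] 0 := by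
  have hwint : ∀ φ : C(𝕋, ℂ), Integrable (fun x => φ x * w x) μ := fun φ =>
    hw.bdd_mul φ.continuous.aestronglyMeasurable (Filter.Eventually.of_forall fun x => φ.norm_coe_le_norm x)
  have hre : (fun x => (w x).re) =ᵐ[μ] 0 := by
    apply real_ae_zero _ hw.re
    intro ψ
    set φ : C(𝕋, ℂ) := ⟨fun x => (ψ x : ℂ), Complex.continuous_ofReal.comp ψ.continuous⟩ with hφ
    have h0 := h φ
    have : (∫ x, φ x * w x ∂μ).re = ∫ x, ψ x * (w x).re ∂μ := by
      rw [← RCLike.re_to_complex, ← integral_re (hwint φ)]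
      apply integral_congr_ae
      filter_upwards with x
      simp [hφ, RCLike.re_to_complex, Complex.mul_re]
    rw [h0] at this
    exact this.symm
  have him : (fun x => (w x).im) =ᵐ[μ] 0 := by
    apply real_ae_zero _ hw.im
    intro ψ
    set φ : C(𝕋, ℂ) := ⟨fun x => (ψ x : ℂ), Complex.continuous_ofReal.comp ψ.continuous⟩ with hφ
    have h0 := h φ
    have : (∫ x, φ x * w x ∂μ).im = ∫ x, ψ x * (w x).im ∂μ := by
      rw [← RCLike.im_to_complex, ← integral_im (hwint φ)]
      apply integral_congr_ae
      filter_upwards with x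
      simp [hφ, RCLike.im_to_complex, Complex.mul_im]
    rw [h0] at this
    exact this.symm
  filter_upwards [hre, him] with x h1 h2
  have h1' : (w x).re = 0 := h1
  have h2' : (w x).im = 0 := h2
  exact Complex.ext h1' h2'

/-- Uniqueness of Fourier coefficients in L¹. -/
lemma ae_zero_of_fourier (w : 𝕋 → ℂ) (hw : Integrable w μ)
    (h : ∀ n : ℤ, ∫ x, fourier n x * w x ∂μ = 0) : w =ᵐ[μ] 0 := by
  have hwint : ∀ φ : C(𝕋, ℂ), Integrable (fun x => φ x * w x) μ := fun φ =>
    hw.bdd_mul φ.continuous.aestronglyMeasurable (Filter.Eventually.of_forall fun x => φ.norm_coe_le_norm x)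
  apply ae_zero_of_integral_continuous w hw
  have map_add' : ∀ φ ψ : C(𝕋, ℂ), ∫ x, (φ + ψ) x * w x ∂μ =
      (∫ x, φ x * w x ∂μ) + ∫ x, ψ x * w x ∂μ := by
    intro φ ψ
    rw [← integral_add (hwint φ) (hwint ψ)]
    apply integral_congr_ae
    filter_upwards with x
    simp [add_mul]
  let Λlin : C(𝕋, ℂ) →ₗ[ℂ] ℂ :=
    { toFun := fun φ => ∫ x, φ x * w x ∂μ
      map_add' := map_add'
      map_smul' := by
        intro c φ
        simp only [RingHom.id_apply]
        rw [← integral_smul]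
        apply integral_congr_ae
        filter_upwards with x
        simp [smul_eq_mul, mul_assoc] }
  have hbound : ∀ φ : C(𝕋, ℂ), ‖Λlin φ‖ ≤ (∫ x, ‖w x‖ ∂μ) * ‖φ‖ := by
    intro φ
    calc ‖∫ x, φ x * w x ∂μ‖ ≤ ∫ x, ‖φ x * w x‖ ∂μ := norm_integral_le_integral_norm _
      _ ≤ ∫ x, ‖φ‖ * ‖w x‖ ∂μ := by
          apply integral_mono_of_nonneg (Filter.Eventually.of_forall fun x => norm_nonneg _)
            (hw.norm.const_mul ‖φ‖)
          filter_upwards with x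
          rw [norm_mul]
          exact mul_le_mul_of_nonneg_right (φ.norm_coe_le_norm x) (norm_nonneg _)
      _ = (∫ x, ‖w x‖ ∂μ) * ‖φ‖ := by rw [integral_const_mul]; ring
  let Λ : C(𝕋, ℂ) →L[ℂ] ℂ := Λlin.mkContinuous _ hbound
  have hΛ0 : Λ = 0 := by
    apply ContinuousLinearMap.ext_on
      (Submodule.dense_iff_topologicalClosure_eq_top.mpr span_fourier_closure_eq_top)
    rintro _ ⟨n, rfl⟩
    show Λlin (fourier n) = 0
    exact h n
  intro φ
  have : Λ φ = 0 := by rw [hΛ0]; rfl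
  exact this

section MainArg

variable (M : Submodule ℂ (Lp ℂ 2 μ))

/-- Double invariance: every `fourier n * f`, `f ∈ M`, has a representative in `M`. -/
lemma exists_rep
    (H : {g : Lp ℂ 2 μ | ∃ f ∈ M,
      (g : 𝕋 → ℂ) =ᵐ[μ] fun x => (toCircle x : ℂ) * f x} = (M : Set (Lp ℂ 2 μ)))
    (f : Lp ℂ 2 μ) (hf : f ∈ M) (n : ℤ) :
    ∃ f' ∈ M, (f' : 𝕋 → ℂ) =ᵐ[μ] fun x => fourier n x * f x := by
  induction n using Int.induction_on with
  | zero => exact ⟨f, hf, by filter_upwards with x; rw [fourier_zero, one_mul]⟩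
  | succ k ih =>
    obtain ⟨f', hf', hcoe⟩ := ih
    set g : Lp ℂ 2 μ := (memℒp_fourier_mul 1 f').toLp _ with hg
    have hgco : (g : 𝕋 → ℂ) =ᵐ[μ] fun x => fourier 1 x * f' x := MemLp.coeFn_toLp _
    have hgM : g ∈ M := by
      have : g ∈ {g : Lp ℂ 2 μ | ∃ f ∈ M,
          (g : 𝕋 → ℂ) =ᵐ[μ] fun x => (toCircle x : ℂ) * f x} := by
        refine ⟨f', hf', ?_⟩
        filter_upwards [hgco] with x hx
        rw [hx, fourier_one]
      rwa [H] at this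
    refine ⟨g, hgM, ?_⟩
    filter_upwards [hgco, hcoe] with x h1 h2
    rw [h1, h2, ← mul_assoc, ← fourier_add]
    norm_num [add_comm]
  | pred k ih =>
    obtain ⟨f', hf', hcoe⟩ := ih
    have : f' ∈ {g : Lp ℂ 2 μ | ∃ f ∈ M,
        (g : 𝕋 → ℂ) =ᵐ[μ] fun x => (toCircle x : ℂ) * f x} := by rw [H]; exact hf'
    obtain ⟨f'', hf'', hcoe''⟩ := this
    refine ⟨f'', hf'', ?_⟩
    filter_upwards [hcoe, hcoe''] with x h1 h2
    have hne : (toCircle x : ℂ) ≠ 0 := Circle.coe_ne_zero _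
    have : (toCircle x : ℂ) * f'' x = fourier (-k) x * f x := by rw [← h2, h1]
    have h3 : f'' x = (fourier 1 x)⁻¹ * (fourier (-k) x * f x) := by
      rw [← this, fourier_one, inv_mul_cancel_left₀ hne]
    have hmul : fourier (-1 : ℤ) x * fourier (1 : ℤ) x = 1 := by
      rw [← fourier_add]; norm_num [fourier_zero]
    rw [h3, ← eq_inv_of_mul_eq_one_left hmul, ← mul_assoc, ← fourier_add,
      show (-1 + -(k:ℤ)) = -(k:ℤ) - 1 by ring]

/-- Key orthogonality: `f ∈ M`, `g ⊥ M` implies `conj f * g = 0` a.e. -/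
lemma conj_mul_ae_zero
    (H : {g : Lp ℂ 2 μ | ∃ f ∈ M,
      (g : 𝕋 → ℂ) =ᵐ[μ] fun x => (toCircle x : ℂ) * f x} = (M : Set (Lp ℂ 2 μ)))
    {f g : Lp ℂ 2 μ} (hf : f ∈ M) (hg : g ∈ Mᗮ) :
    (fun x => (starRingEnd ℂ) (f x) * g x) =ᵐ[μ] 0 := by
  have hw : Integrable (fun x => (starRingEnd ℂ) (f x) * g x) μ := by
    simpa [RCLike.inner_apply, mul_comm] using L2.integrable_inner (𝕜 := ℂ) f g
  apply ae_zero_of_fourier _ hw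
  intro n
  obtain ⟨f', hf', hcoe⟩ := exists_rep M H f hf (-n)
  have h0 : inner (𝕜 := ℂ) f' g = 0 := (Submodule.mem_orthogonal M g).mp hg f' hf'
  rw [L2.inner_def] at h0
  rw [← h0]
  apply integral_congr_ae
  filter_upwards [hcoe] with x hx
  rw [RCLike.inner_apply, hx, map_mul, fourier_neg, Complex.conj_conj]
  ring

end MainArg

end Stmt4Aux

open Stmt4Aux

/-- a closed subspace `M ⊆ L²(𝕋)` satisfies `SM = M` (where `S` is
multiplication by `e^{it}`) iff `M = χ_E · L²(𝕋)` for a measurable `E ⊆ 𝕋`,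
i.e. `M` is the set of `L²` functions vanishing a.e. off `E`; and `E` is
unique up to a null set. -/
theorem stmt_4 (M : Submodule ℂ (Lp ℂ 2 μ)) (hM : IsClosed (M : Set (Lp ℂ 2 μ))) :
    ({g : Lp ℂ 2 μ | ∃ f ∈ M,
        (g : AddCircle (2 * Real.pi) → ℂ)
          =ᵐ[μ] fun x => (toCircle x : ℂ) * f x} = (M : Set (Lp ℂ 2 μ)) ↔
      ∃ E : Set (AddCircle (2 * Real.pi)), MeasurableSet E ∧
        (M : Set (Lp ℂ 2 μ)) =
          {f : Lp ℂ 2 μ | ∀ᵐ x ∂μ, x ∉ E → f x = 0}) ∧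
    (∀ E E' : Set (AddCircle (2 * Real.pi)), MeasurableSet E → MeasurableSet E' →
      (M : Set (Lp ℂ 2 μ)) = {f : Lp ℂ 2 μ | ∀ᵐ x ∂μ, x ∉ E → f x = 0} →
      (M : Set (Lp ℂ 2 μ)) = {f : Lp ℂ 2 μ | ∀ᵐ x ∂μ, x ∉ E' → f x = 0} →
      μ (E ∆ E') = 0) := by
  constructor
  · constructor
    · intro H
      haveI : CompleteSpace M := hM.completeSpace_coe
      set one : Lp ℂ 2 μ := (memLp_const (1 : ℂ)).toLp _ with hone
      have honeco : (one : AddCircle (2 * Real.pi) → ℂ) =ᵐ[μ] fun _ => (1 : ℂ) :=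
        MemLp.coeFn_toLp _
      set q : Lp ℂ 2 μ := (M.orthogonalProjection one : Lp ℂ 2 μ) with hq
      have hqM : q ∈ M := (M.orthogonalProjection one).2
      have hgperp : one - q ∈ Mᗮ := M.sub_starProjection_mem_orthogonal one
      set q₀ := (Lp.aestronglyMeasurable q).mk q with hq₀def
      have hq₀ : StronglyMeasurable q₀ := (Lp.aestronglyMeasurable q).stronglyMeasurable_mk
      have hqq : (q : AddCircle (2 * Real.pi) → ℂ) =ᵐ[μ] q₀ :=
        (Lp.aestronglyMeasurable q).ae_eq_mk
      refine ⟨{x | q₀ x ≠ 0}, ?_, ?_⟩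
      · exact (hq₀.measurable (measurableSet_singleton 0)).compl
      · ext fS
        simp only [Set.mem_setOf_eq, SetLike.mem_coe]
        constructor
        · intro hfM
          have hperp := conj_mul_ae_zero M H hfM hgperp
          have hco : ((one - q : Lp ℂ 2 μ) : AddCircle (2 * Real.pi) → ℂ)
              =ᵐ[μ] (one : AddCircle (2 * Real.pi) → ℂ) - (q : AddCircle (2 * Real.pi) → ℂ) :=
            Lp.coeFn_sub one q
          filter_upwards [hperp, hco, hqq, honeco] with x h1 h2 h3 h4 hxE
          have hq0 : q₀ x = 0 := not_not.mp hxE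
          have h1' : (starRingEnd ℂ) (fS x) * ((one - q : Lp ℂ 2 μ) : _ → ℂ) x = 0 := h1
          rw [h2, Pi.sub_apply, h4, h3, hq0, sub_zero, mul_one] at h1'
          simpa using h1'
        · intro hfE
          rw [← Submodule.orthogonal_orthogonal M]
          rw [Submodule.mem_orthogonal]
          intro u hu
          have hperp := conj_mul_ae_zero M H hqM hu
          rw [L2.inner_def]
          have hz : (fun x => inner (𝕜 := ℂ) (u x) (fS x)) =ᵐ[μ] 0 := by
            filter_upwards [hperp, hqq, hfE] with x h1 h2 h3
            rw [RCLike.inner_apply]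
            by_cases hx : q₀ x = 0
            · rw [h3 (not_not.mpr hx)]; simp
            · have hu0 : u x = 0 := by
                have hqne : (starRingEnd ℂ) (q x) ≠ 0 := by
                  rw [h2]; simpa using hx
                have h1' : (starRingEnd ℂ) (q x) * u x = 0 := h1
                exact (mul_eq_zero.mp h1').resolve_left hqne
              rw [hu0]; simp
          rw [integral_congr_ae hz]
          simp
    · rintro ⟨E, hE, hME⟩
      ext g
      simp only [Set.mem_setOf_eq, SetLike.mem_coe]
      constructor
      · rintro ⟨f, hfM, hfg⟩
        have hfE : ∀ᵐ x ∂μ, x ∉ E → f x = 0 := by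
          have : f ∈ (M : Set (Lp ℂ 2 μ)) := hfM
          rwa [hME] at this
        have : g ∈ (M : Set (Lp ℂ 2 μ)) := by
          rw [hME]
          filter_upwards [hfg, hfE] with x h1 h2 hxE
          rw [h1, h2 hxE, mul_zero]
        exact this
      · intro hg
        have hgE : ∀ᵐ x ∂μ, x ∉ E → g x = 0 := by
          have : g ∈ (M : Set (Lp ℂ 2 μ)) := hg
          rwa [hME] at this
        have hco := MemLp.coeFn_toLp (memℒp_fourier_mul (-1) g)
        refine ⟨(memℒp_fourier_mul (-1) g).toLp _, ?_, ?_⟩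
        · have : (memℒp_fourier_mul (-1) g).toLp _ ∈ (M : Set (Lp ℂ 2 μ)) := by
            rw [hME]
            filter_upwards [hco, hgE] with x h1 h2 hxE
            rw [h1, h2 hxE, mul_zero]
          exact this
        · filter_upwards [hco] with x hx
          have hone : (toCircle x : ℂ) * fourier (-1 : ℤ) x = 1 := by
            rw [← fourier_one, ← fourier_add]
            norm_num [fourier_zero]
          rw [hx, ← mul_assoc, hone, one_mul]
  · intro E E' hE hE' h1 h2
    have key : ∀ (A B : Set (AddCircle (2 * Real.pi))), MeasurableSet A →
        (M : Set (Lp ℂ 2 μ)) = {f : Lp ℂ 2 μ | ∀ᵐ x ∂μ, x ∉ A → f x = 0} →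
        (M : Set (Lp ℂ 2 μ)) = {f : Lp ℂ 2 μ | ∀ᵐ x ∂μ, x ∉ B → f x = 0} →
        μ (A \ B) = 0 := by
      intro A B hA hAeq hBeq
      set χ : Lp ℂ 2 μ := indicatorConstLp 2 hA (measure_ne_top μ A) (1 : ℂ) with hχ
      have hco : (χ : AddCircle (2 * Real.pi) → ℂ) =ᵐ[μ] A.indicator (fun _ => 1) :=
        indicatorConstLp_coeFn
      have hmem : χ ∈ (M : Set (Lp ℂ 2 μ)) := by
        rw [hAeq]
        filter_upwards [hco] with x hx hxA
        rw [hx, Set.indicator_of_notMem hxA]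
      rw [hBeq] at hmem
      have : ∀ᵐ x ∂μ, x ∉ A \ B := by
        filter_upwards [hmem, hco] with x hx hco hxAB
        have := hx hxAB.2
        rw [hco, Set.indicator_of_mem hxAB.1] at this
        exact one_ne_zero this
      rw [ae_iff] at this
      convert this using 2
      ext
      simp
    rw [Set.symmDiff_def]
    exact measure_union_null (key E E' hE h1 h2) (key E' E hE' h2 h1)
end

section
/- (von Neumann's inequality) If T is a linear contraction on a complex Hilbert space and p is a complex polynomial, then ‖p(T)‖ ≤ sup_{|z|≤1} |p(z)|. -/
open Metric Complex MeasureTheory intervalIntegral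
open scoped InnerProductSpace Real

noncomputable section VN3
variable {H : Type*} [NormedAddCommGroup H] [InnerProductSpace ℂ H] [CompleteSpace H]

def cvn (θ : ℝ) : ℂ := Complex.exp (-(θ : ℂ) * Complex.I)

lemma norm_cvn (θ : ℝ) : ‖cvn θ‖ = 1 := by
  simp [cvn, Complex.norm_exp]

def Svn (T : H →L[ℂ] H) (θ : ℝ) : H →L[ℂ] H := Ring.inverse (1 - cvn θ • T)

variable {T : H →L[ℂ] H}

lemma norm_cvn_smul (hT : ‖T‖ < 1) (θ : ℝ) : ‖cvn θ • T‖ < 1 := by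
  rw [norm_smul, norm_cvn, one_mul]; exact hT

lemma pow_apply_norm_le (T : H →L[ℂ] H) (k : ℕ) (x : H) : ‖(T^k) x‖ ≤ ‖T‖^k * ‖x‖ := by
  induction k generalizing x with
  | zero => simp
  | succ k ih =>
    rw [pow_succ, ContinuousLinearMap.mul_apply]
    calc ‖(T^k) (T x)‖ ≤ ‖T‖^k * ‖T x‖ := ih (T x)
      _ ≤ ‖T‖^k * (‖T‖ * ‖x‖) :=
        mul_le_mul_of_nonneg_left (T.le_opNorm x) (by positivity)
      _ = ‖T‖^(k+1) * ‖x‖ := by ring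

lemma hasSum_Svn_apply (hT : ‖T‖ < 1) (θ : ℝ) (x : H) :
    HasSum (fun k : ℕ => (cvn θ)^k • ((T^k) x)) (Svn T θ x) := by
  have h1 := hasSum_geom_series_inverse (cvn θ • T) (norm_cvn_smul hT θ)
  have h2 := (ContinuousLinearMap.apply ℂ H x).hasSum h1
  simpa [Svn, smul_pow, ContinuousLinearMap.smul_apply] using h2

lemma hasSum_inner_Svn (hT : ‖T‖ < 1) (θ : ℝ) (x y : H) :
    HasSum (fun k : ℕ => (cvn θ)^k * ⟪y, (T^k) x⟫_ℂ) ⟪y, Svn T θ x⟫_ℂ := by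
  have h2 := (innerSL ℂ y).hasSum (hasSum_Svn_apply hT θ x)
  simpa [inner_smul_right] using h2

lemma hasSum_inner_Svn' (hT : ‖T‖ < 1) (θ : ℝ) (x y : H) :
    HasSum (fun k : ℕ => ((starRingEnd ℂ) (cvn θ))^k * ⟪(T^k) y, x⟫_ℂ)
      ⟪Svn T θ y, x⟫_ℂ := by
  have h2 := (hasSum_inner_Svn hT θ y x).star
  have e : ∀ k : ℕ, star ((cvn θ)^k * ⟪x, (T^k) y⟫_ℂ)
      = ((starRingEnd ℂ) (cvn θ))^k * ⟪(T^k) y, x⟫_ℂ := by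
    intro k
    simp only [star_mul', star_pow, RCLike.star_def, inner_conj_symm]
  simp only [e] at h2
  have e2 : star (⟪x, Svn T θ y⟫_ℂ) = ⟪Svn T θ y, x⟫_ℂ := by
    simp only [RCLike.star_def, inner_conj_symm]
  rwa [e2] at h2

/-- the basic Fourier integral -/
lemma int_exp (m : ℤ) :
    (∫ θ in (0:ℝ)..(2*π), Complex.exp ((m:ℂ)*(θ:ℂ)*Complex.I))
      = if m = 0 then ((2*π : ℝ):ℂ) else 0 := by
  split_ifs with h
  · subst h
    simp only [Int.cast_zero, zero_mul]
    simp [Complex.exp_zero]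
  · have hc : (m:ℂ)*Complex.I ≠ 0 :=
      mul_ne_zero (by exact_mod_cast h) Complex.I_ne_zero
    have e : ∀ θ : ℝ, (m:ℂ)*(θ:ℂ)*Complex.I = ((m:ℂ)*Complex.I)*(θ:ℂ) := by
      intro θ; ring
    simp_rw [e]
    rw [integral_exp_mul_complex hc]
    have e1 : (m:ℂ)*Complex.I*((2*π:ℝ):ℂ) = (m:ℤ)*(2*(π:ℂ)*Complex.I) := by
      push_cast; ring
    rw [e1, Complex.exp_int_mul_two_pi_mul_I]
    simp

section SwapPart

lemma swap_sum_integral (g : ℕ → ℝ → ℂ) (C r : ℝ) (h0 : 0 ≤ r) (hr : r < 1)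
    (hg : ∀ k, Continuous (g k)) (hb : ∀ k θ, ‖g k θ‖ ≤ C * r^k) :
    (∫ θ in (0:ℝ)..(2*π), (∑' k, g k θ)) = ∑' k, ∫ θ in (0:ℝ)..(2*π), g k θ := by
  have h2π : (0:ℝ) ≤ 2*π := by positivity
  have hInt : ∀ k, IntegrableOn (g k) (Set.Ioc 0 (2*π)) volume := fun k =>
    (hg k).integrableOn_Ioc
  have hsum : Summable fun k => ∫ θ in Set.Ioc 0 (2*π), ‖g k θ‖ := by
    refine Summable.of_nonneg_of_le
      (fun k => integral_nonneg (fun θ => norm_nonneg _)) (fun k => ?_)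
      ((summable_geometric_of_lt_one h0 hr).mul_left ((2*π) * C))
    have hConst : IntegrableOn (fun _ : ℝ => C * r^k) (Set.Ioc 0 (2*π)) volume :=
      integrableOn_const measure_Ioc_lt_top.ne
    calc (∫ θ in Set.Ioc 0 (2*π), ‖g k θ‖)
        ≤ ∫ _ in Set.Ioc 0 (2*π), C * r^k :=
          integral_mono ((hInt k).norm) hConst (fun θ => hb k θ)
      _ = (volume (Set.Ioc (0:ℝ) (2*π))).toReal • (C * r^k) := by
          rw [setIntegral_const]; rfl
      _ = 2*π * C * r^k := by
          rw [Real.volume_Ioc]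
          rw [smul_eq_mul, ENNReal.toReal_ofReal (by linarith)]
          ring
  rw [intervalIntegral.integral_of_le h2π,
    ← MeasureTheory.integral_tsum_of_summable_integral_norm hInt hsum]
  exact tsum_congr fun k => (intervalIntegral.integral_of_le h2π).symm

lemma int_term1 (n k : ℕ) (a : ℂ) :
    (∫ θ in (0:ℝ)..(2*π), Complex.exp ((n:ℂ)*(θ:ℂ)*Complex.I) * ((cvn θ)^k * a))
      = (if (n:ℤ) = (k:ℤ) then ((2*π:ℝ):ℂ) else 0) * a := by
  have e : ∀ θ:ℝ, Complex.exp ((n:ℂ)*(θ:ℂ)*Complex.I) * ((cvn θ)^k * a)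
      = Complex.exp (((((n:ℤ)-(k:ℤ)):ℤ):ℂ)*(θ:ℂ)*Complex.I) * a := by
    intro θ
    have h1 : (n:ℂ)*(θ:ℂ)*Complex.I + (k:ℂ)*(-(θ:ℂ)*Complex.I)
        = (((((n:ℤ)-(k:ℤ)):ℤ):ℂ))*(θ:ℂ)*Complex.I := by
      push_cast
      ring
    rw [cvn, ← Complex.exp_nat_mul, ← mul_assoc, ← Complex.exp_add, h1]
  simp_rw [e]
  rw [intervalIntegral.integral_mul_const, int_exp ((n:ℤ)-(k:ℤ))]
  congr 1
  simp [sub_eq_zero]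

lemma conj_cvn (θ : ℝ) : (starRingEnd ℂ) (cvn θ) = Complex.exp ((θ : ℂ) * Complex.I) := by
  rw [cvn, ← Complex.exp_conj]
  congr 1
  simp

lemma int_term2 (n k : ℕ) (a : ℂ) :
    (∫ θ in (0:ℝ)..(2*π),
        Complex.exp ((n:ℂ)*(θ:ℂ)*Complex.I) * (((starRingEnd ℂ) (cvn θ))^k * a))
      = (if (n:ℤ) + (k:ℤ) = 0 then ((2*π:ℝ):ℂ) else 0) * a := by
  have e : ∀ θ:ℝ, Complex.exp ((n:ℂ)*(θ:ℂ)*Complex.I) * (((starRingEnd ℂ) (cvn θ))^k * a)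
      = Complex.exp (((((n:ℤ)+(k:ℤ)):ℤ):ℂ)*(θ:ℂ)*Complex.I) * a := by
    intro θ
    have h1 : (n:ℂ)*(θ:ℂ)*Complex.I + (k:ℂ)*((θ:ℂ)*Complex.I)
        = (((((n:ℤ)+(k:ℤ)):ℤ):ℂ))*(θ:ℂ)*Complex.I := by
      push_cast
      ring
    rw [conj_cvn, ← Complex.exp_nat_mul, ← mul_assoc, ← Complex.exp_add, h1]
  simp_rw [e]
  rw [intervalIntegral.integral_mul_const, int_exp ((n:ℤ)+(k:ℤ))]

lemma int_term3 (n : ℕ) (a : ℂ) :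
    (∫ θ in (0:ℝ)..(2*π), Complex.exp ((n:ℂ)*(θ:ℂ)*Complex.I) * a)
      = (if n = 0 then ((2*π:ℝ):ℂ) else 0) * a := by
  have e : ∀ θ:ℝ, ((n:ℕ):ℂ)*(θ:ℂ)*Complex.I = (((n:ℕ):ℤ):ℂ)*(θ:ℂ)*Complex.I := by
    intro θ
    push_cast
    ring
  simp_rw [e]
  rw [intervalIntegral.integral_mul_const, int_exp (n:ℤ)]
  congr 1
  simp

end SwapPart

section FourierPart
variable {T : H →L[ℂ] H}

def fvn (T : H →L[ℂ] H) (x y : H) (θ : ℝ) : ℂ :=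
  ⟪y, Svn T θ x⟫_ℂ + ⟪Svn T θ y, x⟫_ℂ - ⟪y, x⟫_ℂ

lemma isUnit_svn (hT : ‖T‖ < 1) (θ : ℝ) : IsUnit (1 - cvn θ • T) :=
  isUnit_one_sub_of_norm_lt_one (norm_cvn_smul hT θ)

lemma Svn_left (hT : ‖T‖ < 1) (θ : ℝ) : (1 - cvn θ • T) * Svn T θ = 1 :=
  Ring.mul_inverse_cancel _ (isUnit_svn hT θ)

lemma continuous_cvn : Continuous cvn := by
  unfold cvn
  fun_prop

lemma continuous_Svn (hT : ‖T‖ < 1) : Continuous (Svn T) := by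
  rw [continuous_iff_continuousAt]
  intro θ
  have h1 : Continuous fun θ : ℝ => 1 - cvn θ • T :=
    continuous_const.sub (continuous_cvn.smul continuous_const)
  have h2 : ContinuousAt Ring.inverse (1 - cvn θ • T) := by
    have := NormedRing.inverse_continuousAt (isUnit_svn hT θ).unit
    simpa using this
  exact ContinuousAt.comp (g := Ring.inverse) h2 h1.continuousAt

lemma continuous_Svn_apply (hT : ‖T‖ < 1) (x : H) :
    Continuous fun θ => Svn T θ x :=
  (ContinuousLinearMap.apply ℂ H x).continuous.comp (continuous_Svn hT)

lemma continuous_fvn (hT : ‖T‖ < 1) (x y : H) : Continuous (fvn T x y) := by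
  unfold fvn
  exact ((continuous_const.inner (continuous_Svn_apply hT x)).add
    ((continuous_Svn_apply hT y).inner continuous_const)).sub continuous_const

lemma continuous_en (n : ℕ) : Continuous fun θ : ℝ => Complex.exp ((n:ℂ)*(θ:ℂ)*Complex.I) :=
  Complex.continuous_exp.comp
    ((continuous_const.mul Complex.continuous_ofReal).mul continuous_const)

lemma norm_en (n : ℕ) (θ : ℝ) : ‖Complex.exp ((n:ℂ)*(θ:ℂ)*Complex.I)‖ = 1 := by
  rw [Complex.norm_exp]
  have : ((n:ℂ)*(θ:ℂ)*Complex.I).re = 0 := by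
    simp [Complex.mul_re, Complex.mul_im]
  rw [this, Real.exp_zero]

lemma norm_inner_pow_le (T : H →L[ℂ] H) (x y : H) (k : ℕ) :
    ‖⟪y, (T^k) x⟫_ℂ‖ ≤ ‖x‖ * ‖y‖ * ‖T‖^k := by
  calc ‖⟪y, (T^k) x⟫_ℂ‖ ≤ ‖y‖ * ‖(T^k) x‖ := norm_inner_le_norm y _
    _ ≤ ‖y‖ * (‖T‖^k * ‖x‖) :=
      mul_le_mul_of_nonneg_left (pow_apply_norm_le T k x) (norm_nonneg y)
    _ = ‖x‖ * ‖y‖ * ‖T‖^k := by ring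

lemma fourier_fvn (hT : ‖T‖ < 1) (x y : H) (n : ℕ) :
    (∫ θ in (0:ℝ)..(2*π), Complex.exp ((n:ℂ)*(θ:ℂ)*Complex.I) * fvn T x y θ)
      = ((2*π:ℝ):ℂ) * ⟪y, (T^n) x⟫_ℂ := by
  set r := ‖T‖ with hrdef
  have hr0 : 0 ≤ r := norm_nonneg T
  -- part 1
  have hI1 : (∫ θ in (0:ℝ)..(2*π), Complex.exp ((n:ℂ)*(θ:ℂ)*Complex.I) * ⟪y, Svn T θ x⟫_ℂ)
      = ((2*π:ℝ):ℂ) * ⟪y, (T^n) x⟫_ℂ := by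
    have e : ∀ θ:ℝ, Complex.exp ((n:ℂ)*(θ:ℂ)*Complex.I) * ⟪y, Svn T θ x⟫_ℂ
        = ∑' k:ℕ, Complex.exp ((n:ℂ)*(θ:ℂ)*Complex.I) * ((cvn θ)^k * ⟪y, (T^k) x⟫_ℂ) :=
      fun θ => ((hasSum_inner_Svn hT θ x y).mul_left _).tsum_eq.symm
    simp_rw [e]
    rw [swap_sum_integral
      (fun k θ => Complex.exp ((n:ℂ)*(θ:ℂ)*Complex.I) * ((cvn θ)^k * ⟪y, (T^k) x⟫_ℂ)) (‖x‖*‖y‖) r hr0 hT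
      (fun k => (continuous_en n).mul ((continuous_cvn.pow k).mul continuous_const))
      (fun k θ => by
        rw [norm_mul, norm_en, one_mul, norm_mul, norm_pow, norm_cvn, one_pow, one_mul]
        exact norm_inner_pow_le T x y k)]
    simp_rw [int_term1]
    rw [tsum_eq_single n (fun k hk => by
      rw [if_neg (fun h => hk (Int.natCast_inj.mp h).symm), zero_mul])]
    rw [if_pos rfl]
  -- part 2
  have hI2 : (∫ θ in (0:ℝ)..(2*π), Complex.exp ((n:ℂ)*(θ:ℂ)*Complex.I) * ⟪Svn T θ y, x⟫_ℂ)
      = (if n = 0 then ((2*π:ℝ):ℂ) * ⟪y, x⟫_ℂ else 0) := by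
    have e : ∀ θ:ℝ, Complex.exp ((n:ℂ)*(θ:ℂ)*Complex.I) * ⟪Svn T θ y, x⟫_ℂ
        = ∑' k:ℕ, Complex.exp ((n:ℂ)*(θ:ℂ)*Complex.I)
            * (((starRingEnd ℂ) (cvn θ))^k * ⟪(T^k) y, x⟫_ℂ) :=
      fun θ => ((hasSum_inner_Svn' hT θ x y).mul_left _).tsum_eq.symm
    simp_rw [e]
    have hconjc : Continuous fun θ => (starRingEnd ℂ) (cvn θ) :=
      Complex.continuous_conj.comp continuous_cvn
    rw [swap_sum_integral
      (fun k θ => Complex.exp ((n:ℂ)*(θ:ℂ)*Complex.I)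
        * (((starRingEnd ℂ) (cvn θ))^k * ⟪(T^k) y, x⟫_ℂ)) (‖y‖*‖x‖) r hr0 hT
      (fun k => (continuous_en n).mul ((hconjc.pow k).mul continuous_const))
      (fun k θ => by
        rw [norm_mul, norm_en, one_mul, norm_mul, norm_pow, RCLike.norm_conj,
          norm_cvn, one_pow, one_mul]
        calc ‖⟪(T^k) y, x⟫_ℂ‖ ≤ ‖(T^k) y‖ * ‖x‖ := norm_inner_le_norm _ _
          _ ≤ (‖T‖^k * ‖y‖) * ‖x‖ :=
            mul_le_mul_of_nonneg_right (pow_apply_norm_le T k y) (norm_nonneg x)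
          _ = ‖y‖*‖x‖*‖T‖^k := by ring)]
    simp_rw [int_term2]
    by_cases hn : n = 0
    · subst hn
      rw [tsum_eq_single 0 (fun k hk => by
        rw [if_neg (fun h => hk (by exact_mod_cast by linarith [h] : k = 0)), zero_mul])]
      rw [if_pos rfl, if_pos (by norm_num)]
      simp
    · rw [if_neg hn]
      have : ∀ k:ℕ, (if (n:ℤ) + (k:ℤ) = 0 then ((2*π:ℝ):ℂ) else 0) * ⟪(T^k) y, x⟫_ℂ = 0 := by
        intro k
        rw [if_neg (by omega : ¬((n:ℤ) + (k:ℤ) = 0)), zero_mul]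
      simp_rw [this]
      exact tsum_zero
  -- part 3
  have hI3 : (∫ θ in (0:ℝ)..(2*π), Complex.exp ((n:ℂ)*(θ:ℂ)*Complex.I) * ⟪y, x⟫_ℂ)
      = (if n = 0 then ((2*π:ℝ):ℂ) else 0) * ⟪y, x⟫_ℂ := int_term3 n _
  -- combine
  have hsplit : ∀ θ:ℝ, Complex.exp ((n:ℂ)*(θ:ℂ)*Complex.I) * fvn T x y θ
      = Complex.exp ((n:ℂ)*(θ:ℂ)*Complex.I) * ⟪y, Svn T θ x⟫_ℂ
        + Complex.exp ((n:ℂ)*(θ:ℂ)*Complex.I) * ⟪Svn T θ y, x⟫_ℂ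
        - Complex.exp ((n:ℂ)*(θ:ℂ)*Complex.I) * ⟪y, x⟫_ℂ := by
    intro θ
    rw [fvn]
    ring
  simp_rw [hsplit]
  have ia : IntervalIntegrable
      (fun θ:ℝ => Complex.exp ((n:ℂ)*(θ:ℂ)*Complex.I) * ⟪y, Svn T θ x⟫_ℂ) volume 0 (2*π) :=
    ((continuous_en n).mul (continuous_const.inner (continuous_Svn_apply hT x))).intervalIntegrable 0 (2*π)
  have ib : IntervalIntegrable
      (fun θ:ℝ => Complex.exp ((n:ℂ)*(θ:ℂ)*Complex.I) * ⟪Svn T θ y, x⟫_ℂ) volume 0 (2*π) :=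
    ((continuous_en n).mul ((continuous_Svn_apply hT y).inner continuous_const)).intervalIntegrable 0 (2*π)
  have ic : IntervalIntegrable
      (fun θ:ℝ => Complex.exp ((n:ℂ)*(θ:ℂ)*Complex.I) * ⟪y, x⟫_ℂ) volume 0 (2*π) :=
    ((continuous_en n).mul continuous_const).intervalIntegrable 0 (2*π)
  rw [intervalIntegral.integral_sub (ia.add ib) ic, intervalIntegral.integral_add ia ib,
    hI1, hI2, hI3]
  by_cases hn : n = 0
  · subst hn
    rw [if_pos rfl, if_pos rfl]
    simp
  · rw [if_neg hn, if_neg hn]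
    ring

end FourierPart

section EvalPart
variable {T : H →L[ℂ] H}

lemma conj_cvn_mul (θ : ℝ) : (starRingEnd ℂ) (cvn θ) * cvn θ = 1 := by
  rw [conj_cvn, cvn, ← Complex.exp_add,
    show (θ:ℂ)*Complex.I + -(θ:ℂ)*Complex.I = 0 from by ring, Complex.exp_zero]

lemma fvn_eq (hT : ‖T‖ < 1) (x y : H) (θ : ℝ) :
    fvn T x y θ = ⟪Svn T θ y, Svn T θ x⟫_ℂ - ⟪T (Svn T θ y), T (Svn T θ x)⟫_ℂ := by
  have happ : ∀ w : H, Svn T θ w - cvn θ • T (Svn T θ w) = w := by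
    intro w
    have h := congrArg (fun A : H →L[ℂ] H => A w) (Svn_left hT θ)
    simpa [ContinuousLinearMap.mul_apply, ContinuousLinearMap.sub_apply,
      ContinuousLinearMap.smul_apply, ContinuousLinearMap.one_apply] using h
  obtain ⟨u, hu⟩ : ∃ u, Svn T θ x = u := ⟨_, rfl⟩
  obtain ⟨v, hv⟩ : ∃ v, Svn T θ y = v := ⟨_, rfl⟩
  have hx : u - cvn θ • T u = x := by rw [← hu]; exact happ x
  have hy : v - cvn θ • T v = y := by rw [← hv]; exact happ y
  rw [fvn, hu, hv, ← hx, ← hy]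
  simp only [inner_sub_left, inner_sub_right, inner_smul_left, inner_smul_right]
  linear_combination (-⟪T v, T u⟫_ℂ) * conj_cvn_mul θ

lemma inner_self_ofReal (w : H) : ⟪w, w⟫_ℂ = ((‖w‖^2 : ℝ) : ℂ) := by
  have h1 : ⟪w, w⟫_ℂ = ((‖w‖ : ℝ) : ℂ)^2 := inner_self_eq_norm_sq_to_K (𝕜 := ℂ) (E := H) w
  rw [h1]
  push_cast
  ring

lemma fvn_diag (hT : ‖T‖ < 1) (w : H) (θ : ℝ) :
    fvn T w w θ = ((‖Svn T θ w‖^2 - ‖T (Svn T θ w)‖^2 : ℝ) : ℂ) := by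
  rw [fvn_eq hT w w θ, inner_self_ofReal, inner_self_ofReal]
  push_cast
  ring

lemma continuous_gvn (hT : ‖T‖ < 1) (w : H) :
    Continuous fun θ => ‖Svn T θ w‖^2 - ‖T (Svn T θ w)‖^2 :=
  (((continuous_Svn_apply hT w).norm.pow 2)).sub
    ((T.continuous.comp (continuous_Svn_apply hT w)).norm.pow 2)

lemma integral_gvn (hT : ‖T‖ < 1) (w : H) :
    (∫ θ in (0:ℝ)..(2*π), (‖Svn T θ w‖^2 - ‖T (Svn T θ w)‖^2)) = 2*π*‖w‖^2 := by
  have h0 := fourier_fvn hT w w 0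
  have e : ∀ θ:ℝ, Complex.exp (((0:ℕ):ℂ)*(θ:ℂ)*Complex.I) * fvn T w w θ
      = ((‖Svn T θ w‖^2 - ‖T (Svn T θ w)‖^2 : ℝ):ℂ) := by
    intro θ
    rw [show (((0:ℕ):ℂ)*(θ:ℂ)*Complex.I) = 0 from by push_cast; ring,
      Complex.exp_zero, one_mul, fvn_diag hT w θ]
  simp_rw [e] at h0
  rw [intervalIntegral.integral_ofReal] at h0
  have h2 : ((2*π:ℝ):ℂ) * ⟪w, (T^0) w⟫_ℂ = ((2*π*‖w‖^2 : ℝ):ℂ) := by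
    rw [pow_zero, ContinuousLinearMap.one_apply, inner_self_ofReal]
    push_cast
    ring
  rw [h2] at h0
  exact Complex.ofReal_injective h0

lemma integral_eval (hT : ‖T‖ < 1) (x y : H) (p : Polynomial ℂ) :
    (∫ θ in (0:ℝ)..(2*π), p.eval (Complex.exp ((θ:ℂ)*Complex.I)) * fvn T x y θ)
      = ((2*π:ℝ):ℂ) * ⟪y, (Polynomial.aeval T p) x⟫_ℂ := by
  have e : ∀ θ:ℝ, p.eval (Complex.exp ((θ:ℂ)*Complex.I)) * fvn T x y θ
      = ∑ i ∈ Finset.range (p.natDegree+1),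
          p.coeff i * (Complex.exp (((i:ℕ):ℂ)*(θ:ℂ)*Complex.I) * fvn T x y θ) := by
    intro θ
    rw [Polynomial.eval_eq_sum_range, Finset.sum_mul]
    apply Finset.sum_congr rfl
    intro i _
    rw [← Complex.exp_nat_mul]
    ring_nf
  simp_rw [e]
  rw [intervalIntegral.integral_finset_sum
    (f := fun i θ => p.coeff i * (Complex.exp (((i:ℕ):ℂ)*(θ:ℂ)*Complex.I) * fvn T x y θ)) (fun i _ =>
    (continuous_const.mul ((continuous_en i).mul (continuous_fvn hT x y))).intervalIntegrable 0 (2*π))]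
  have e2 : ∀ i ∈ Finset.range (p.natDegree+1),
      (∫ θ in (0:ℝ)..(2*π),
        p.coeff i * (Complex.exp (((i:ℕ):ℂ)*(θ:ℂ)*Complex.I) * fvn T x y θ))
      = p.coeff i * (((2*π:ℝ):ℂ) * ⟪y, (T^i) x⟫_ℂ) := by
    intro i _
    rw [intervalIntegral.integral_const_mul, fourier_fvn hT x y i]
  rw [Finset.sum_congr rfl e2]
  have e3 : (Polynomial.aeval T p) x = ∑ i ∈ Finset.range (p.natDegree+1),
      p.coeff i • ((T^i) x) := by
    rw [Polynomial.aeval_eq_sum_range, ContinuousLinearMap.sum_apply]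
    apply Finset.sum_congr rfl
    intro i _
    rw [ContinuousLinearMap.smul_apply]
  rw [e3, inner_sum, Finset.mul_sum]
  apply Finset.sum_congr rfl
  intro i _
  rw [inner_smul_right]
  ring

end EvalPart

section FinalPart
variable {T : H →L[ℂ] H}

lemma sqrt_amgm (a b s : ℝ) (ha : 0 ≤ a) (hb : 0 ≤ b) (hs : 0 < s) :
    Real.sqrt a * Real.sqrt b ≤ (s*a + b/s)/2 := by
  have h2 : 2*s*(Real.sqrt a * Real.sqrt b) ≤ s^2*a + b := by
    nlinarith [Real.sq_sqrt ha, Real.sq_sqrt hb, sq_nonneg (s*Real.sqrt a - Real.sqrt b),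
      Real.sqrt_nonneg a, Real.sqrt_nonneg b]
  have h3 : s*(2*(Real.sqrt a * Real.sqrt b)) ≤ s*(s*a + b/s) := by
    have hc : s*(s*a + b/s) = s^2*a + b := by
      field_simp
    rw [hc, show s*(2*(Real.sqrt a * Real.sqrt b)) = 2*s*(Real.sqrt a * Real.sqrt b) from by ring]
    exact h2
  have h4 := (mul_le_mul_iff_right₀ hs).mp h3
  rw [le_div_iff₀ (by norm_num : (0:ℝ) < 2)]
  linarith

lemma csB (hT : ‖T‖ ≤ 1) (u v : H) :
    ‖(⟪v, u⟫_ℂ - ⟪T v, T u⟫_ℂ)‖ ≤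
      Real.sqrt (‖u‖^2 - ‖T u‖^2) * Real.sqrt (‖v‖^2 - ‖T v‖^2) := by
  have hnn : ∀ w : H, 0 ≤ ‖w‖^2 - ‖T w‖^2 := by
    intro w
    have h1 : ‖T w‖ ≤ ‖w‖ := by
      calc ‖T w‖ ≤ ‖T‖ * ‖w‖ := T.le_opNorm w
        _ ≤ 1 * ‖w‖ := mul_le_mul_of_nonneg_right hT (norm_nonneg w)
        _ = ‖w‖ := one_mul _
    nlinarith [norm_nonneg (T w)]
  have hdiag : ∀ w : H, ⟪w, w⟫_ℂ - ⟪T w, T w⟫_ℂ = ((‖w‖^2 - ‖T w‖^2 : ℝ) : ℂ) := by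
    intro w
    have h1 : ⟪w, w⟫_ℂ = ((‖w‖ : ℝ) : ℂ)^2 := inner_self_eq_norm_sq_to_K (𝕜 := ℂ) (E := H) w
    have h2 : ⟪T w, T w⟫_ℂ = ((‖T w‖ : ℝ) : ℂ)^2 := inner_self_eq_norm_sq_to_K (𝕜 := ℂ) (E := H) _
    rw [h1, h2]
    push_cast
    ring
  set a := ‖u‖^2 - ‖T u‖^2 with ha
  set b := ‖v‖^2 - ‖T v‖^2 with hb
  have ha0 : 0 ≤ a := hnn u
  have hb0 : 0 ≤ b := hnn v
  by_cases hz0 : (⟪v, u⟫_ℂ - ⟪T v, T u⟫_ℂ) = 0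
  · rw [hz0, norm_zero]
    positivity
  · set z := ⟪v, u⟫_ℂ - ⟪T v, T u⟫_ℂ with hz
    set n := ‖z‖ with hnd
    have hn : 0 < n := norm_pos_iff.mpr hz0
    have hnne : ((n:ℝ):ℂ) ≠ 0 := by
      simpa using hn.ne'
    have hzz : z * (starRingEnd ℂ) z = ((n:ℝ):ℂ)^2 := Complex.mul_conj' z
    obtain ⟨c, hcc, hcbarz, hczbar⟩ :
        ∃ c : ℂ, (starRingEnd ℂ) c * c = 1 ∧ (starRingEnd ℂ) c * z = -((n:ℝ):ℂ) ∧
          c * (starRingEnd ℂ) z = -((n:ℝ):ℂ) := by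
      have hd : ((n:ℝ):ℂ)^2 / ((n:ℝ):ℂ) = ((n:ℝ):ℂ) := by
        rw [sq, mul_div_assoc, div_self hnne, mul_one]
      refine ⟨-(z / (n:ℝ)), ?_, ?_, ?_⟩
      · have e1 : (starRingEnd ℂ) (-(z/((n:ℝ):ℂ))) * (-(z/((n:ℝ):ℂ)))
            = (z * (starRingEnd ℂ) z) / (((n:ℝ):ℂ)^2) := by
          rw [map_neg, map_div₀, Complex.conj_ofReal]
          ring
        rw [e1, hzz, div_self (pow_ne_zero 2 hnne)]
      · have e2 : (starRingEnd ℂ) (-(z/((n:ℝ):ℂ))) * z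
            = -((z * (starRingEnd ℂ) z) / ((n:ℝ):ℂ)) := by
          rw [map_neg, map_div₀, Complex.conj_ofReal]
          ring
        rw [e2, hzz, hd]
      · have e3 : (-(z/((n:ℝ):ℂ))) * (starRingEnd ℂ) z
            = -((z * (starRingEnd ℂ) z) / ((n:ℝ):ℂ)) := by
          ring
        rw [e3, hzz, hd]
    have hBuv : ⟪u, v⟫_ℂ - ⟪T u, T v⟫_ℂ = (starRingEnd ℂ) z := by
      rw [hz, map_sub, inner_conj_symm, inner_conj_symm]
    have key : ∀ s t : ℝ, 0 ≤ s^2*a + t^2*b - 2*s*t*n := by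
      intro s t
      set w := (s:ℂ) • u + ((t:ℂ)*c) • v with hw
      have expand : ⟪w, w⟫_ℂ - ⟪T w, T w⟫_ℂ
          = (s:ℂ)^2 * (⟪u,u⟫_ℂ - ⟪T u, T u⟫_ℂ)
            + (s:ℂ)*(t:ℂ)*(c*((starRingEnd ℂ) z))
            + (s:ℂ)*(t:ℂ)*((starRingEnd ℂ) c * z)
            + (t:ℂ)^2*((starRingEnd ℂ) c * c)*(⟪v,v⟫_ℂ - ⟪T v, T v⟫_ℂ) := by
        rw [← hBuv]
        simp only [hw, map_add, ContinuousLinearMap.map_smul, inner_add_left, inner_add_right,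
          inner_smul_left, inner_smul_right, Complex.conj_ofReal, map_mul]
        ring
      rw [hdiag u, hdiag v, hczbar, hcbarz, hcc, hdiag w] at expand
      have h3 : ((‖w‖^2 - ‖T w‖^2 : ℝ) : ℂ) = ((s^2*a + t^2*b - 2*s*t*n : ℝ) : ℂ) := by
        rw [expand, ha, hb]
        push_cast
        ring
      have h2 : ‖w‖^2 - ‖T w‖^2 = s^2*a + t^2*b - 2*s*t*n :=
        Complex.ofReal_injective h3
      rw [← h2]
      exact hnn w
    have hzab : n^2 ≤ a*b := by
      rcases eq_or_lt_of_le ha0 with haz | hapos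
      · exfalso
        have hk := key ((b+1)/(2*n)) 1
        rw [← haz] at hk
        have h3 : ((b+1)/(2*n))^2 * 0 + 1^2*b - 2*((b+1)/(2*n))*1*n = -1 := by
          field_simp
          ring
        rw [h3] at hk
        linarith
      · have := key n a
        nlinarith
    calc n = Real.sqrt (n^2) := (Real.sqrt_sq hn.le).symm
      _ ≤ Real.sqrt (a*b) := Real.sqrt_le_sqrt hzab
      _ = Real.sqrt a * Real.sqrt b := Real.sqrt_mul ha0 b

lemma gvn_nonneg (hT1 : ‖T‖ ≤ 1) (w : H) : 0 ≤ ‖w‖^2 - ‖T w‖^2 := by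
  have h1 : ‖T w‖ ≤ ‖w‖ := by
    calc ‖T w‖ ≤ ‖T‖ * ‖w‖ := T.le_opNorm w
      _ ≤ 1 * ‖w‖ := mul_le_mul_of_nonneg_right hT1 (norm_nonneg w)
      _ = ‖w‖ := one_mul _
  nlinarith [norm_nonneg (T w)]

lemma vn_aux (T : H →L[ℂ] H) (hT : ‖T‖ < 1) (p : Polynomial ℂ) (M : ℝ)
    (hM : ∀ z : ℂ, ‖z‖ ≤ 1 → ‖p.eval z‖ ≤ M) :
    ‖(Polynomial.aeval T p : H →L[ℂ] H)‖ ≤ M := by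
  have hT1 : ‖T‖ ≤ 1 := hT.le
  have hM0 : 0 ≤ M := le_trans (norm_nonneg _) (hM 0 (by norm_num))
  have h2π : (0:ℝ) < 2*π := by positivity
  set A : H →L[ℂ] H := Polynomial.aeval T p with hA
  have main : ∀ (x y : H) (s : ℝ), 0 < s →
      ‖⟪y, A x⟫_ℂ‖ ≤ M/2 * (s*‖x‖^2 + ‖y‖^2/s) := by
    intro x y s hs
    have heval := integral_eval hT x y p
    have h1 : ‖∫ θ in (0:ℝ)..(2*π), p.eval (Complex.exp ((θ:ℂ)*Complex.I)) * fvn T x y θ‖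
        ≤ ∫ θ in (0:ℝ)..(2*π), ‖p.eval (Complex.exp ((θ:ℂ)*Complex.I)) * fvn T x y θ‖ :=
      intervalIntegral.norm_integral_le_integral_norm h2π.le
    have hgcx := continuous_gvn hT x
    have hgcy := continuous_gvn hT y
    have hibound : IntervalIntegrable (fun θ =>
        M * ((s*(‖Svn T θ x‖^2 - ‖T (Svn T θ x)‖^2)
          + (‖Svn T θ y‖^2 - ‖T (Svn T θ y)‖^2)/s)/2)) volume 0 (2*π) :=
      (continuous_const.mul (((continuous_const.mul hgcx).add
        (hgcy.div_const s)).div_const 2)).intervalIntegrable 0 (2*π)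
    have h2 : (∫ θ in (0:ℝ)..(2*π), ‖p.eval (Complex.exp ((θ:ℂ)*Complex.I)) * fvn T x y θ‖)
        ≤ ∫ θ in (0:ℝ)..(2*π),
            M * ((s*(‖Svn T θ x‖^2 - ‖T (Svn T θ x)‖^2)
              + (‖Svn T θ y‖^2 - ‖T (Svn T θ y)‖^2)/s)/2) := by
      apply intervalIntegral.integral_mono_on
        (f := fun θ => ‖p.eval (Complex.exp ((θ:ℂ)*Complex.I)) * fvn T x y θ‖) h2π.le
        ((((Polynomial.continuous p).comp (Complex.continuous_exp.comp
          (Complex.continuous_ofReal.mul continuous_const))).mul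
            (continuous_fvn hT x y)).norm.intervalIntegrable 0 (2*π)) hibound
      intro θ _
      rw [norm_mul]
      have hp1 : ‖p.eval (Complex.exp ((θ:ℂ)*Complex.I))‖ ≤ M := by
        apply hM
        have : ‖Complex.exp ((θ:ℂ)*Complex.I)‖ = 1 := by
          rw [Complex.norm_exp]
          have : ((θ:ℂ)*Complex.I).re = 0 := by simp
          rw [this, Real.exp_zero]
        rw [this]
      have hf1 : ‖fvn T x y θ‖
          ≤ (s*(‖Svn T θ x‖^2 - ‖T (Svn T θ x)‖^2)
              + (‖Svn T θ y‖^2 - ‖T (Svn T θ y)‖^2)/s)/2 := by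
        rw [fvn_eq hT x y θ]
        calc ‖⟪Svn T θ y, Svn T θ x⟫_ℂ - ⟪T (Svn T θ y), T (Svn T θ x)⟫_ℂ‖
            ≤ Real.sqrt (‖Svn T θ x‖^2 - ‖T (Svn T θ x)‖^2)
              * Real.sqrt (‖Svn T θ y‖^2 - ‖T (Svn T θ y)‖^2) := csB hT1 _ _
          _ ≤ _ := sqrt_amgm _ _ s (gvn_nonneg hT1 _) (gvn_nonneg hT1 _) hs
      exact mul_le_mul hp1 hf1 (norm_nonneg _) hM0
    have h3 : (∫ θ in (0:ℝ)..(2*π),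
        M * ((s*(‖Svn T θ x‖^2 - ‖T (Svn T θ x)‖^2)
          + (‖Svn T θ y‖^2 - ‖T (Svn T θ y)‖^2)/s)/2))
        = 2*π * (M/2 * (s*‖x‖^2 + ‖y‖^2/s)) := by
      have efun : ∀ θ:ℝ, M * ((s*(‖Svn T θ x‖^2 - ‖T (Svn T θ x)‖^2)
          + (‖Svn T θ y‖^2 - ‖T (Svn T θ y)‖^2)/s)/2)
          = (M*s/2) * (‖Svn T θ x‖^2 - ‖T (Svn T θ x)‖^2)
            + (M/(2*s)) * (‖Svn T θ y‖^2 - ‖T (Svn T θ y)‖^2) := by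
        intro θ
        field_simp
      simp_rw [efun]
      rw [intervalIntegral.integral_add
        (f := fun θ => (M*s/2) * (‖Svn T θ x‖^2 - ‖T (Svn T θ x)‖^2))
        (g := fun θ => (M/(2*s)) * (‖Svn T θ y‖^2 - ‖T (Svn T θ y)‖^2))
        ((continuous_const.mul hgcx).intervalIntegrable 0 (2*π))
        ((continuous_const.mul hgcy).intervalIntegrable 0 (2*π)),
        intervalIntegral.integral_const_mul, intervalIntegral.integral_const_mul,
        integral_gvn hT x, integral_gvn hT y]
      field_simp
    have h4 : 2*π * ‖⟪y, A x⟫_ℂ‖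
        = ‖∫ θ in (0:ℝ)..(2*π), p.eval (Complex.exp ((θ:ℂ)*Complex.I)) * fvn T x y θ‖ := by
      rw [heval, norm_mul, Complex.norm_real, Real.norm_eq_abs,
        _root_.abs_of_nonneg h2π.le]
    nlinarith [norm_nonneg (⟪y, A x⟫_ℂ)]
  refine A.opNorm_le_bound hM0 (fun x => ?_)
  by_cases hx0 : x = 0
  · simp [hx0]
  by_cases hN0 : A x = 0
  · rw [hN0, norm_zero]
    positivity
  have hxpos : 0 < ‖x‖ := norm_pos_iff.mpr hx0
  have hNpos : 0 < ‖A x‖ := norm_pos_iff.mpr hN0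
  have h5 := main x (A x) (‖A x‖/‖x‖) (by positivity)
  rw [inner_self_ofReal, Complex.norm_real, Real.norm_eq_abs,
    _root_.abs_of_nonneg (by positivity)] at h5
  have h7 : (‖A x‖/‖x‖)*‖x‖^2 = ‖A x‖*‖x‖ := by
    field_simp
  have h8 : ‖A x‖^2/(‖A x‖/‖x‖) = ‖A x‖*‖x‖ := by
    rw [div_div_eq_mul_div, div_eq_iff hNpos.ne']
    ring
  rw [h7, h8] at h5
  nlinarith

end FinalPart
end VN3




open Metric

/-- von Neumann's inequality: if `T` is a contraction on a
complex Hilbert space and `p` a complex polynomial, then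
`‖p(T)‖ ≤ sup_{|z| ≤ 1} |p z|`. -/
theorem stmt_12 {H : Type*} [NormedAddCommGroup H] [InnerProductSpace ℂ H]
    [CompleteSpace H] (T : H →L[ℂ] H) (hT : ‖T‖ ≤ 1) (p : Polynomial ℂ) :
    ‖Polynomial.aeval T p‖ ≤ ⨆ z : closedBall (0 : ℂ) 1, ‖p.eval (z : ℂ)‖ := by
  set M := ⨆ z : closedBall (0 : ℂ) 1, ‖p.eval (z : ℂ)‖ with hMdef
  have hbdd : BddAbove (Set.range fun z : closedBall (0:ℂ) 1 => ‖p.eval (z:ℂ)‖) := by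
    have hcomp : IsCompact (closedBall (0:ℂ) 1) := isCompact_closedBall 0 1
    have := hcomp.bddAbove_image ((Polynomial.continuous p).norm.continuousOn)
    rwa [Set.image_eq_range] at this
  have hM : ∀ z : ℂ, ‖z‖ ≤ 1 → ‖p.eval z‖ ≤ M := by
    intro z hz
    have hzmem : z ∈ closedBall (0:ℂ) 1 := by
      simpa [mem_closedBall, dist_zero_right] using hz
    exact le_ciSup hbdd (⟨z, hzmem⟩ : closedBall (0:ℂ) 1)
  have hlim : Filter.Tendsto (fun t : ℝ => ‖(Polynomial.aeval (((t:ℂ) • T)) p : H →L[ℂ] H)‖)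
      (nhdsWithin (1:ℝ) (Set.Iio 1)) (nhds ‖(Polynomial.aeval T p : H →L[ℂ] H)‖) := by
    have hc : Continuous fun t : ℝ => (Polynomial.aeval (((t:ℂ) • T)) p : H →L[ℂ] H) := by
      have e : ∀ t : ℝ, (Polynomial.aeval (((t:ℂ) • T)) p : H →L[ℂ] H)
          = ∑ i ∈ Finset.range (p.natDegree+1), p.coeff i • (((t:ℂ)^i) • (T^i)) := by
        intro t
        rw [Polynomial.aeval_eq_sum_range]
        apply Finset.sum_congr rfl
        intro i _
        rw [smul_pow]
      simp only [e]
      apply continuous_finset_sum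
      intro i _
      exact (((Complex.continuous_ofReal.pow i).smul continuous_const)).const_smul (p.coeff i)
    have hc2 := (hc.norm.tendsto 1).mono_left
      (nhdsWithin_le_nhds (s := Set.Iio (1:ℝ)))
    have e1 : (((1:ℝ):ℂ) • T) = T := by
      rw [Complex.ofReal_one, one_smul]
    rwa [e1] at hc2
  have hev : ∀ᶠ (t : ℝ) in nhdsWithin (1:ℝ) (Set.Iio (1:ℝ)),
      ‖(Polynomial.aeval (((t:ℂ) • T)) p : H →L[ℂ] H)‖ ≤ M := by
    have hIoo : Set.Ioo (0:ℝ) 1 ∈ nhdsWithin (1:ℝ) (Set.Iio 1) :=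
      Ioo_mem_nhdsLT_of_mem ⟨one_pos, le_refl 1⟩
    filter_upwards [hIoo] with t ht
    apply vn_aux _ _ p M hM
    rw [norm_smul, Complex.norm_real, Real.norm_eq_abs, _root_.abs_of_nonneg ht.1.le]
    calc t * ‖T‖ ≤ t * 1 := mul_le_mul_of_nonneg_left hT ht.1.le
      _ < 1 := by linarith [ht.2]
  exact le_of_tendsto hlim hev
end

section
/- Let {a_j} be a sequence in the open unit disc with all a_j ≠ 0. The infinite Blaschke product Π_j (|a_j|/a_j)·(a_j - z)/(1 - conj(a_j)z) converges uniformly on compact subsets of the disc to a nonzero holomorphic function if and only if Σ_j (1 - |a_j|) < ∞; in that case its zero set is exactly {a_j}. -/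
open Metric Filter Complex Topology

/-- Partial products of the Blaschke product with zeros `a j`. -/
noncomputable def blaschkePartial (a : ℕ → ℂ) (N : ℕ) (z : ℂ) : ℂ :=
  ∏ j ∈ Finset.range N,
    ((‖a j‖ : ℂ) / a j) * ((a j - z) / (1 - starRingEnd ℂ (a j) * z))

noncomputable def bl (a z : ℂ) : ℂ := ((‖a‖ : ℂ) / a) * ((a - z) / (1 - starRingEnd ℂ a * z))

lemma bl_def (a : ℕ → ℂ) (N : ℕ) (z : ℂ) :
    blaschkePartial a N z = ∏ j ∈ Finset.range N, bl (a j) z := rfl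

lemma bl_den_ne (a z : ℂ) (ha : ‖a‖ < 1) (hz : ‖z‖ ≤ 1) : 1 - starRingEnd ℂ a * z ≠ 0 := by
  intro h
  have h2 : ‖starRingEnd ℂ a * z‖ < 1 := by
    rw [norm_mul, RCLike.norm_conj]
    calc ‖a‖ * ‖z‖ ≤ ‖a‖ * 1 := mul_le_mul_of_nonneg_left hz (norm_nonneg _)
      _ < 1 := by simpa using ha
  have : starRingEnd ℂ a * z = 1 := by linear_combination -h
  rw [this] at h2; simp at h2

lemma bl_sub_one (a z : ℂ) (ha0 : a ≠ 0) (hd : 1 - starRingEnd ℂ a * z ≠ 0) :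
    bl a z - 1 = ((↑‖a‖ - 1) * (a + ↑‖a‖ * z)) / (a * (1 - starRingEnd ℂ a * z)) := by
  have haa : starRingEnd ℂ a * a = (‖a‖ : ℂ) ^ 2 := by
    rw [mul_comm, Complex.mul_conj']
  rw [bl]
  rw [div_mul_div_comm, div_sub_one (mul_ne_zero ha0 hd)]
  congr 1
  linear_combination z * haa

lemma norm_sq_identity (a z : ℂ) :
    ‖a - z‖ ^ 2 = ‖1 - starRingEnd ℂ a * z‖ ^ 2 - (1 - ‖a‖ ^ 2) * (1 - ‖z‖ ^ 2) := by
  simp only [Complex.sq_norm, Complex.normSq_apply,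
    Complex.sub_re, Complex.sub_im, Complex.mul_re, Complex.mul_im, Complex.one_re,
    Complex.one_im, Complex.conj_re, Complex.conj_im]
  ring

lemma bl_eq_zero_iff (a z : ℂ) (ha0 : a ≠ 0) (hd : 1 - starRingEnd ℂ a * z ≠ 0) :
    bl a z = 0 ↔ a = z := by
  rw [bl]
  constructor
  · intro h
    rcases mul_eq_zero.mp h with h | h
    · exfalso
      rcases div_eq_zero_iff.mp h with h | h
      · exact ha0 (by simpa using h)
      · exact ha0 h
    · rcases div_eq_zero_iff.mp h with h | h
      · exact sub_eq_zero.mp h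
      · exact absurd h hd
  · intro h; simp [h]

lemma norm_bl (a z : ℂ) (ha0 : a ≠ 0) : ‖bl a z‖ = ‖a - z‖ / ‖1 - starRingEnd ℂ a * z‖ := by
  rw [bl, norm_mul, norm_div, norm_div]
  rw [Complex.norm_real, Real.norm_eq_abs, _root_.abs_of_nonneg (norm_nonneg a)]
  rw [div_self (norm_ne_zero_iff.mpr ha0), one_mul]

lemma sq_norm_bl_le (a z : ℂ) (r : ℝ) (ha0 : a ≠ 0) (ha1 : ‖a‖ < 1) (hz : ‖z‖ ≤ r)
    (hr1 : r < 1) (hr0 : 0 ≤ r) :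
    ‖bl a z‖ ^ 2 ≤ 1 - (1 - r) / (1 + r) * (1 - ‖a‖) := by
  have hz1 : ‖z‖ ≤ 1 := hz.trans hr1.le
  have hd : 1 - starRingEnd ℂ a * z ≠ 0 := bl_den_ne a z ha1 hz1
  have hdn : (0:ℝ) < ‖1 - starRingEnd ℂ a * z‖ := norm_pos_iff.mpr hd
  have hdle : ‖1 - starRingEnd ℂ a * z‖ ≤ 1 + r := by
    calc ‖1 - starRingEnd ℂ a * z‖ ≤ ‖(1:ℂ)‖ + ‖starRingEnd ℂ a * z‖ := norm_sub_le _ _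
      _ ≤ 1 + r := by
          rw [norm_one, norm_mul, RCLike.norm_conj]
          have : ‖a‖ * ‖z‖ ≤ 1 * r := by
            apply mul_le_mul ha1.le hz (norm_nonneg _) zero_le_one
          linarith
  rw [norm_bl a z ha0, div_pow]
  rw [div_le_iff₀ (by positivity)]
  have key := norm_sq_identity a z
  have h1 : 1 - ‖a‖ ≤ 1 - ‖a‖ ^ 2 := by nlinarith [norm_nonneg a]
  have h2 : (1 - r) * (1 + r) ≤ 1 - ‖z‖ ^ 2 := by nlinarith [norm_nonneg z]
  have h3 : ‖1 - starRingEnd ℂ a * z‖ ^ 2 ≤ (1 + r) ^ 2 := by nlinarith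
  have hna : ‖a‖ ≤ 1 := ha1.le
  have h4 : (1 - r) / (1 + r) * (1 - ‖a‖) * ‖1 - starRingEnd ℂ a * z‖ ^ 2
      ≤ (1 - ‖a‖ ^ 2) * (1 - ‖z‖ ^ 2) := by
    have hr' : (0:ℝ) < 1 + r := by linarith
    rw [div_mul_eq_mul_div, div_mul_eq_mul_div, div_le_iff₀ hr']
    calc (1 - r) * (1 - ‖a‖) * ‖1 - starRingEnd ℂ a * z‖ ^ 2
        ≤ (1 - r) * (1 - ‖a‖) * (1 + r) ^ 2 := by
          apply mul_le_mul_of_nonneg_left h3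
          exact mul_nonneg (by linarith) (by linarith)
      _ ≤ (1 - ‖a‖ ^ 2) * (1 - ‖z‖ ^ 2) * (1 + r) := by
          have A : (1 - ‖a‖) * ((1 - r) * (1 + r)) ≤ (1 - ‖a‖ ^ 2) * (1 - ‖z‖ ^ 2) :=
            mul_le_mul h1 h2 (mul_nonneg (by linarith) (by linarith)) (by nlinarith)
          nlinarith [mul_le_mul_of_nonneg_right A hr'.le]
  nlinarith

lemma norm_bl_sub_one_le (a z : ℂ) (r : ℝ) (ha0 : a ≠ 0) (ha2 : 1/2 ≤ ‖a‖) (ha1 : ‖a‖ < 1)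
    (hz : ‖z‖ ≤ r) (hr1 : r < 1) :
    ‖bl a z - 1‖ ≤ 4 / (1 - r) * (1 - ‖a‖) := by
  have hz1 : ‖z‖ ≤ 1 := hz.trans hr1.le
  have hr0 : (0:ℝ) ≤ r := (norm_nonneg z).trans hz
  have hd : 1 - starRingEnd ℂ a * z ≠ 0 := bl_den_ne a z ha1 hz1
  rw [bl_sub_one a z ha0 hd, norm_div, norm_mul, norm_mul]
  have e1 : ‖((‖a‖ : ℂ) - 1)‖ = 1 - ‖a‖ := by
    rw [show ((‖a‖ : ℂ) - 1) = ((‖a‖ - 1 : ℝ) : ℂ) by push_cast; ring, Complex.norm_real,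
      Real.norm_eq_abs, abs_of_nonpos (by linarith)]
    ring
  have e2 : ‖a + (‖a‖ : ℂ) * z‖ ≤ 2 := by
    calc ‖a + (‖a‖ : ℂ) * z‖ ≤ ‖a‖ + ‖(‖a‖ : ℂ) * z‖ := norm_add_le _ _
      _ ≤ 1 + 1 := by
          apply add_le_add ha1.le
          rw [norm_mul, Complex.norm_real, Real.norm_eq_abs, _root_.abs_of_nonneg (norm_nonneg a)]
          calc ‖a‖ * ‖z‖ ≤ 1 * 1 := mul_le_mul ha1.le hz1 (norm_nonneg z) zero_le_one
            _ = 1 := one_mul 1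
      _ = 2 := by ring
  have e3 : 1 - r ≤ ‖1 - starRingEnd ℂ a * z‖ := by
    have : ‖starRingEnd ℂ a * z‖ ≤ r := by
      rw [norm_mul, RCLike.norm_conj]
      calc ‖a‖ * ‖z‖ ≤ 1 * r := mul_le_mul ha1.le hz (norm_nonneg z) zero_le_one
        _ = r := one_mul r
    calc 1 - r ≤ 1 - ‖starRingEnd ℂ a * z‖ := by linarith
      _ ≤ ‖1 - starRingEnd ℂ a * z‖ := by
          have := norm_sub_norm_le (1:ℂ) (starRingEnd ℂ a * z)
          simpa using this
  rw [e1]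
  have hden : (0:ℝ) < ‖a‖ * ‖1 - starRingEnd ℂ a * z‖ := by
    apply mul_pos (by linarith) (by linarith)
  rw [div_le_iff₀ hden]
  have hnn : 0 ≤ 1 - ‖a‖ := by linarith
  calc (1 - ‖a‖) * ‖a + (‖a‖ : ℂ) * z‖ ≤ (1 - ‖a‖) * 2 := by
        exact mul_le_mul_of_nonneg_left e2 hnn
    _ ≤ 4 / (1 - r) * (1 - ‖a‖) * (‖a‖ * ‖1 - starRingEnd ℂ a * z‖) := by
        have h5 : 1/2 * (1 - r) ≤ ‖a‖ * ‖1 - starRingEnd ℂ a * z‖ :=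
          mul_le_mul ha2 e3 (by linarith) (by linarith)
        have h6 : 0 < 1 - r := by linarith
        rw [div_mul_eq_mul_div, div_mul_eq_mul_div, le_div_iff₀ h6]
        nlinarith [mul_le_mul_of_nonneg_left h5 hnn]

lemma bl_ne_zero (a z : ℂ) (ha0 : a ≠ 0) (hd : 1 - starRingEnd ℂ a * z ≠ 0) (haz : a ≠ z) :
    bl a z ≠ 0 := fun h => haz ((bl_eq_zero_iff a z ha0 hd).mp h)

lemma blp_diff (a : ℕ → ℂ) (h0 : ∀ j, a j ≠ 0) (h1 : ∀ j, ‖a j‖ < 1) (N : ℕ) :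
    DifferentiableOn ℂ (blaschkePartial a N) (ball (0:ℂ) 1) := by
  have : blaschkePartial a N = fun z => ∏ j ∈ Finset.range N, bl (a j) z := rfl
  rw [this]
  apply DifferentiableOn.fun_finsetProd
  intro j _
  apply DifferentiableOn.mul (differentiableOn_const _)
  apply DifferentiableOn.div
  · exact (differentiableOn_const _).sub differentiableOn_id
  · exact (differentiableOn_const _).sub ((differentiableOn_const _).mul differentiableOn_id)
  · intro z hz
    exact bl_den_ne (a j) z (h1 j) (le_of_lt (by simpa [dist_eq_norm] using hz))

lemma tuo_shift {G : ℕ → ℂ → ℂ} {g : ℂ → ℂ} {s : Set ℂ} {k : ℕ}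
    (h : TendstoUniformlyOn (fun N => G (k + N)) g atTop s) :
    TendstoUniformlyOn G g atTop s := by
  intro u hu
  obtain ⟨N₀, hN₀⟩ := eventually_atTop.mp (h u hu)
  rw [eventually_atTop]
  refine ⟨k + N₀, fun N hN => ?_⟩
  have hGN : k + (N - k) = N := by omega
  rw [← hGN]
  exact hN₀ (N - k) (by omega)

lemma main_conv (a : ℕ → ℂ) (h0 : ∀ j, a j ≠ 0) (h1 : ∀ j, ‖a j‖ < 1)
    (hs : Summable fun j => 1 - ‖a j‖) {r : ℝ} (hr0 : 0 ≤ r) (hr1 : r < 1) :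
    ∃ g : ℂ → ℂ, TendstoUniformlyOn (blaschkePartial a) g atTop (closedBall 0 r) ∧
      ∀ z ∈ closedBall (0:ℂ) r, (g z = 0 ↔ ∃ j, a j = z) := by
  set t : ℕ → ℝ := fun j => 1 - ‖a j‖ with ht_def
  have ht0 : Tendsto t atTop (𝓝 0) := hs.tendsto_atTop_zero
  set ε : ℝ := min (1/2) ((1 - r)/16) with hε_def
  have hεpos : 0 < ε := lt_min (by norm_num) (by linarith)
  obtain ⟨k, hk⟩ : ∃ k, ∀ j, k ≤ j → t j < ε := eventually_atTop.mp (ht0.eventually (gt_mem_nhds hεpos))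
  -- basic facts for j ≥ k
  have hgt : ∀ j, k ≤ j → r < ‖a j‖ := by
    intro j hj
    have := hk j hj
    have h2 : t j < (1 - r)/16 := lt_of_lt_of_le this (min_le_right _ _)
    simp only [ht_def] at h2
    linarith
  have hhalf : ∀ j, k ≤ j → 1/2 ≤ ‖a j‖ := by
    intro j hj
    have := lt_of_lt_of_le (hk j hj) (min_le_left _ _)
    simp only [ht_def] at this
    linarith
  set s : Set ℂ := closedBall (0:ℂ) r with hs_def
  have hmem : ∀ z ∈ s, ‖z‖ ≤ r := by
    intro z hz
    simpa [hs_def, dist_eq_norm] using hz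
  -- the log series
  set f : ℕ → ℂ → ℂ := fun n z => Complex.log (bl (a (k + n)) z) with hf_def
  set u : ℕ → ℝ := fun n => 8/(1 - r) * t (k + n) with hu_def
  have hu : Summable u := by
    apply Summable.mul_left
    have := (summable_nat_add_iff k).mpr hs
    simpa [add_comm] using this
  have hfu : ∀ n z, z ∈ s → ‖f n z‖ ≤ u n := by
    intro n z hz
    have hz' : ‖z‖ ≤ r := hmem z hz
    have hkj : k ≤ k + n := Nat.le_add_right _ _
    have htj : t (k + n) < ε := hk _ hkj
    have htnn : 0 ≤ t (k + n) := by
      have := (h1 (k + n)).le; simp only [ht_def]; linarith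
    have hsub : ‖bl (a (k + n)) z - 1‖ ≤ 4/(1 - r) * t (k + n) :=
      norm_bl_sub_one_le (a (k + n)) z r (h0 _) (hhalf _ hkj) (h1 _) hz' hr1
    have hq : 4/(1 - r) * t (k + n) ≤ 1/4 := by
      have h2 : t (k + n) ≤ (1 - r)/16 := le_of_lt (lt_of_lt_of_le htj (min_le_right _ _))
      have h3 : 0 < 1 - r := by linarith
      rw [div_mul_eq_mul_div, div_le_iff₀ h3] at *
      nlinarith
    have hhalf' : ‖bl (a (k + n)) z - 1‖ ≤ 1/2 := by linarith
    have e1 : bl (a (k + n)) z = 1 + (bl (a (k + n)) z - 1) := by ring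
    calc ‖f n z‖ = ‖Complex.log (1 + (bl (a (k + n)) z - 1))‖ := by rw [hf_def]; rw [← e1]
      _ ≤ 3/2 * ‖bl (a (k + n)) z - 1‖ := Complex.norm_log_one_add_half_le_self hhalf'
      _ ≤ 3/2 * (4/(1 - r) * t (k + n)) := by linarith
      _ ≤ u n := by
          simp only [hu_def]
          have h3 : 0 < 1 - r := by linarith
          have e : (8:ℝ)/(1-r) * t (k+n) - 3/2 * (4/(1-r) * t (k+n)) = 2 * t (k+n) / (1-r) := by
            ring
          have pos : 0 ≤ 2 * t (k+n) / (1-r) := div_nonneg (by linarith) h3.le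
          linarith
  set L : ℂ → ℂ := fun z => ∑' n, f n z with hL_def
  have hLconv : TendstoUniformlyOn (fun N z => ∑ n ∈ Finset.range N, f n z) L atTop s :=
    tendstoUniformlyOn_tsum_nat hu hfu
  set M : ℝ := ∑' n, u n with hM_def
  have hM : ∀ z ∈ s, ‖L z‖ ≤ M := by
    intro z hz
    have hsumn : Summable fun n => ‖f n z‖ :=
      Summable.of_nonneg_of_le (fun n => norm_nonneg _) (fun n => hfu n z hz) hu
    calc ‖L z‖ ≤ ∑' n, ‖f n z‖ := norm_tsum_le_tsum_norm hsumn
      _ ≤ M := Summable.tsum_le_tsum (fun n => hfu n z hz) hsumn hu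
  set F : ℂ → ℂ := blaschkePartial a k with hF_def
  have hFcont : ContinuousOn F s := by
    apply (blp_diff a h0 h1 k).continuousOn.mono
    intro z hz
    have := hmem z hz
    simp only [mem_ball, dist_eq_norm, sub_zero]
    linarith
  obtain ⟨C, hC⟩ := (isCompact_closedBall (0:ℂ) r).exists_bound_of_continuousOn hFcont
  have hC0 : 0 ≤ C := le_trans (norm_nonneg (F 0)) (hC 0 (by simp [hr0]))
  set D : ℝ := 2 * (C + 1) * Real.exp M with hD_def
  have hDpos : 0 < D := by positivity
  set g : ℂ → ℂ := fun z => F z * Complex.exp (L z) with hg_def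
  -- uniform convergence of F * exp(partial sums) to g
  have hE : TendstoUniformlyOn (fun N z => F z * Complex.exp (∑ n ∈ Finset.range N, f n z))
      g atTop s := by
    rw [Metric.tendstoUniformlyOn_iff]
    intro δ' hδ'
    set δ : ℝ := min 1 (δ' / D) with hδ_def
    have hδpos : 0 < δ := lt_min one_pos (by positivity)
    filter_upwards [Metric.tendstoUniformlyOn_iff.mp hLconv δ hδpos] with N hN z hz
    have hdist := hN z hz
    set S : ℂ := ∑ n ∈ Finset.range N, f n z with hS_def
    have hdS : ‖S - L z‖ < δ := by
      rw [← dist_eq_norm, dist_comm]; exact hdist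
    have hdS1 : ‖S - L z‖ ≤ 1 := le_of_lt (lt_of_lt_of_le hdS (min_le_left _ _))
    have factor : Complex.exp (L z) - Complex.exp S
        = Complex.exp (L z) * (1 - Complex.exp (S - L z)) := by
      rw [mul_one_sub, ← Complex.exp_add]
      have : L z + (S - L z) = S := by ring
      rw [this]
    have hexpL : ‖Complex.exp (L z)‖ ≤ Real.exp M := by
      rw [Complex.norm_exp]
      apply Real.exp_le_exp.mpr
      exact le_trans (Complex.re_le_norm _) (hM z hz)
    have hexp1 : ‖1 - Complex.exp (S - L z)‖ ≤ 2 * ‖S - L z‖ := by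
      rw [norm_sub_rev]
      simpa using Complex.norm_exp_sub_one_le (x := S - L z)
        (by simpa using hdS1)
    rw [dist_eq_norm]
    have expand : g z - F z * Complex.exp S = F z * (Complex.exp (L z) - Complex.exp S) := by
      rw [hg_def]; ring
    rw [expand, norm_mul, factor, norm_mul]
    have hFz : ‖F z‖ ≤ C := hC z hz
    calc ‖F z‖ * (‖Complex.exp (L z)‖ * ‖1 - Complex.exp (S - L z)‖)
        ≤ (C + 1) * (Real.exp M * (2 * ‖S - L z‖)) := by
          apply mul_le_mul (by linarith) _ (by positivity) (by linarith)
          apply mul_le_mul hexpL hexp1 (norm_nonneg _) (Real.exp_nonneg _)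
      _ = D * ‖S - L z‖ := by rw [hD_def]; ring
      _ < D * δ := by
          apply mul_lt_mul_of_pos_left hdS hDpos
      _ ≤ D * (δ' / D) := mul_le_mul_of_nonneg_left (min_le_right _ _) hDpos.le
      _ = δ' := by field_simp
  -- partial product identity
  have hPN : ∀ N, ∀ z ∈ s, blaschkePartial a (k + N) z
      = F z * Complex.exp (∑ n ∈ Finset.range N, f n z) := by
    intro N z hz
    have hz' : ‖z‖ ≤ r := hmem z hz
    rw [bl_def, Finset.prod_range_add, Complex.exp_sum]
    congr 1
    apply Finset.prod_congr rfl
    intro j _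
    rw [hf_def]
    rw [Complex.exp_log]
    apply bl_ne_zero _ _ (h0 _) (bl_den_ne _ _ (h1 _) (hz'.trans hr1.le))
    intro hEq
    have := hgt (k + j) (Nat.le_add_right _ _)
    rw [hEq] at this
    linarith
  have hshift : TendstoUniformlyOn (fun N => blaschkePartial a (k + N)) g atTop s := by
    apply hE.congr
    filter_upwards with N z hz
    exact (hPN N z hz).symm
  refine ⟨g, tuo_shift hshift, ?_⟩
  intro z hz
  have hz' : ‖z‖ ≤ r := hmem z hz
  have hzero : g z = 0 ↔ F z = 0 := by
    rw [hg_def]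
    simp [Complex.exp_ne_zero]
  rw [hzero, hF_def, bl_def, Finset.prod_eq_zero_iff]
  constructor
  · rintro ⟨j, _, hj⟩
    exact ⟨j, (bl_eq_zero_iff _ _ (h0 j) (bl_den_ne _ _ (h1 j) (hz'.trans hr1.le))).mp hj⟩
  · rintro ⟨j, hj⟩
    have hjk : j < k := by
      by_contra hge
      have := hgt j (le_of_not_gt hge)
      rw [hj] at this
      linarith
    exact ⟨j, Finset.mem_range.mpr hjk,
      (bl_eq_zero_iff _ _ (h0 j) (bl_den_ne _ _ (h1 j) (hz'.trans hr1.le))).mpr hj⟩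

noncomputable def Bfun (a : ℕ → ℂ) : ℂ → ℂ :=
  fun z => limUnder atTop (fun N => blaschkePartial a N z)

lemma conv_B (a : ℕ → ℂ) (h0 : ∀ j, a j ≠ 0) (h1 : ∀ j, ‖a j‖ < 1)
    (hs : Summable fun j => 1 - ‖a j‖) {r : ℝ} (hr0 : 0 ≤ r) (hr1 : r < 1) :
    TendstoUniformlyOn (blaschkePartial a) (Bfun a) atTop (closedBall 0 r) ∧
      ∀ z ∈ closedBall (0:ℂ) r, (Bfun a z = 0 ↔ ∃ j, a j = z) := by
  obtain ⟨g, hg, hzero⟩ := main_conv a h0 h1 hs hr0 hr1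
  have heq : Set.EqOn g (Bfun a) (closedBall 0 r) := by
    intro z hz
    exact ((hg.tendsto_at hz).limUnder_eq).symm
  exact ⟨hg.congr_right heq, fun z hz => by rw [← heq hz]; exact hzero z hz⟩

lemma tlu_B (a : ℕ → ℂ) (h0 : ∀ j, a j ≠ 0) (h1 : ∀ j, ‖a j‖ < 1)
    (hs : Summable fun j => 1 - ‖a j‖) :
    TendstoLocallyUniformlyOn (blaschkePartial a) (Bfun a) atTop (ball (0:ℂ) 1) := by
  rw [tendstoLocallyUniformlyOn_iff_forall_isCompact isOpen_ball]
  intro K hK hKc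
  rcases K.eq_empty_or_nonempty with h | h
  · exact h ▸ tendstoUniformlyOn_empty
  · obtain ⟨z0, hz0, hmax⟩ := hKc.exists_isMaxOn h continuous_norm.continuousOn
    have hr0 : (0:ℝ) ≤ ‖z0‖ := norm_nonneg _
    have hr1 : ‖z0‖ < 1 := by simpa [mem_ball, dist_eq_norm] using hK hz0
    have hsub : K ⊆ closedBall 0 ‖z0‖ := by
      intro z hz
      simp only [mem_closedBall, dist_eq_norm, sub_zero]
      exact hmax hz
    exact ((conv_B a h0 h1 hs hr0 hr1).1).mono hsub

lemma blp_div_zero (a : ℕ → ℂ) (h0 : ∀ j, a j ≠ 0) (h1 : ∀ j, ‖a j‖ < 1)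
    (hns : ¬ Summable fun j => 1 - ‖a j‖) (z : ℂ) (hz : ‖z‖ < 1) :
    Tendsto (fun N => blaschkePartial a N z) atTop (𝓝 0) := by
  set r : ℝ := ‖z‖ with hr_def
  have hr0 : (0:ℝ) ≤ r := norm_nonneg _
  set c : ℝ := (1 - r)/(1 + r) with hc_def
  have hcpos : 0 < c := div_pos (by linarith) (by linarith)
  have hb : ∀ N, ‖blaschkePartial a N z‖^2
      ≤ Real.exp (-(c * ∑ j ∈ Finset.range N, (1 - ‖a j‖))) := by
    intro N
    rw [bl_def, norm_prod, ← Finset.prod_pow]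
    have he : Real.exp (-(c * ∑ j ∈ Finset.range N, (1 - ‖a j‖)))
        = ∏ j ∈ Finset.range N, Real.exp (-(c * (1 - ‖a j‖))) := by
      rw [← Real.exp_sum]
      congr 1
      rw [Finset.mul_sum]
      exact (Finset.sum_neg_distrib _).symm
    rw [he]
    apply Finset.prod_le_prod (fun j _ => sq_nonneg _)
    intro j _
    have hle := sq_norm_bl_le (a j) z r (h0 j) (h1 j) le_rfl hz hr0
    have := Real.add_one_le_exp (-(c * (1 - ‖a j‖)))
    rw [← hc_def] at hle
    linarith
  have hnn : ∀ j, 0 ≤ 1 - ‖a j‖ := fun j => by linarith [(h1 j).le]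
  have hS : Tendsto (fun N => ∑ j ∈ Finset.range N, (1 - ‖a j‖)) atTop atTop :=
    (not_summable_iff_tendsto_nat_atTop_of_nonneg hnn).mp hns
  have hexp : Tendsto (fun N => Real.exp (-(c * ∑ j ∈ Finset.range N, (1 - ‖a j‖))))
      atTop (𝓝 0) := by
    apply Real.tendsto_exp_atBot.comp
    apply tendsto_neg_atTop_atBot.comp
    exact hS.const_mul_atTop hcpos
  have hsq : Tendsto (fun N => ‖blaschkePartial a N z‖^2) atTop (𝓝 0) :=
    squeeze_zero (fun N => sq_nonneg _) hb hexp
  have hnorm : Tendsto (fun N => ‖blaschkePartial a N z‖) atTop (𝓝 0) := by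
    have h2 := hsq.sqrt
    rw [Real.sqrt_zero] at h2
    have he2 : (fun N => Real.sqrt (‖blaschkePartial a N z‖^2))
        = fun N => ‖blaschkePartial a N z‖ :=
      funext fun N => Real.sqrt_sq (norm_nonneg _)
    rwa [he2] at h2
  exact tendsto_zero_iff_norm_tendsto_zero.mpr hnorm

/-- for a sequence `a j ≠ 0` in the open unit disc, the Blaschke
product converges uniformly on compact subsets of the disc to a nonzero
holomorphic function iff `Σ (1 - |a j|) < ∞`; in that case its zero set is
exactly `{a j}`. -/
theorem stmt_14 (a : ℕ → ℂ) (h0 : ∀ j, a j ≠ 0) (h1 : ∀ j, ‖a j‖ < 1) :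
    ((∃ B : ℂ → ℂ, DifferentiableOn ℂ B (ball (0 : ℂ) 1) ∧
        (∃ z ∈ ball (0 : ℂ) 1, B z ≠ 0) ∧
        TendstoLocallyUniformlyOn (blaschkePartial a) B atTop (ball (0 : ℂ) 1)) ↔
      Summable fun j => 1 - ‖a j‖) ∧
    ((Summable fun j => 1 - ‖a j‖) → ∀ B : ℂ → ℂ,
      TendstoLocallyUniformlyOn (blaschkePartial a) B atTop (ball (0 : ℂ) 1) →
      ∀ z ∈ ball (0 : ℂ) 1, (B z = 0 ↔ ∃ j, a j = z)) := by
  constructor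
  · constructor
    · rintro ⟨B, _, ⟨z0, hz0, hBz0⟩, hTLU⟩
      by_contra hns
      have hz0' : ‖z0‖ < 1 := by simpa [mem_ball, dist_eq_norm] using hz0
      have h2 := blp_div_zero a h0 h1 hns z0 hz0'
      have h3 : Tendsto (fun N => blaschkePartial a N z0) atTop (𝓝 (B z0)) :=
        hTLU.tendsto_at hz0
      exact hBz0 (tendsto_nhds_unique h3 h2)
    · intro hs
      have htlu := tlu_B a h0 h1 hs
      refine ⟨Bfun a, ?_, ⟨0, by simp, ?_⟩, htlu⟩
      · exact htlu.differentiableOn (Eventually.of_forall (blp_diff a h0 h1)) isOpen_ball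
      · have h2 := (conv_B a h0 h1 hs (r := 1/2) (by norm_num) (by norm_num)).2 0
          (by rw [mem_closedBall, dist_self]; norm_num)
        intro hB0
        obtain ⟨j, hj⟩ := h2.mp hB0
        exact h0 j hj
  · intro hs B hTLU z hz
    have hz' : ‖z‖ < 1 := by simpa [mem_ball, dist_eq_norm] using hz
    have hc := conv_B a h0 h1 hs (r := ‖z‖) (norm_nonneg _) hz'
    have hzmem : z ∈ closedBall (0:ℂ) ‖z‖ := by simp [mem_closedBall, dist_eq_norm]
    have h2 : Tendsto (fun N => blaschkePartial a N z) atTop (𝓝 (Bfun a z)) :=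
      (hc.1).tendsto_at hzmem
    have h3 : Tendsto (fun N => blaschkePartial a N z) atTop (𝓝 (B z)) :=
      hTLU.tendsto_at hz
    rw [tendsto_nhds_unique h3 h2]
    exact hc.2 z hzmem
end

section
/- (Necessity of the Pick condition) Let λ₁,…,λₙ be points in the unit disc and μ₁,…,μₙ complex numbers. If there exists H ∈ H^∞ with ‖H‖_{H^∞} ≤ 1 and H(λ_j) = μ_j for all j, then the Pick matrix [ (1 - conj(μ_i)μ_j) / (1 - λ_j·conj(λ_i)) ]_{i,j=1}^n is positive semidefinite. -/
open Metric
open scoped ComplexOrder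

open Filter Topology Real

noncomputable def kerP (a z : ℂ) : ℂ := (1 - (starRingEnd ℂ) a * z)⁻¹

lemma denomP_ne {a z : ℂ} (ha : ‖a‖ < 1) (hz : ‖z‖ ≤ 1) :
    1 - (starRingEnd ℂ) a * z ≠ 0 := by
  intro h
  have h1 : (starRingEnd ℂ) a * z = 1 := by linear_combination -h
  have : ‖(starRingEnd ℂ) a * z‖ < 1 := by
    rw [norm_mul, RCLike.norm_conj]
    calc ‖a‖ * ‖z‖ ≤ ‖a‖ * 1 := by nlinarith [norm_nonneg a]
    _ < 1 := by simpa using ha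
  rw [h1] at this; simp at this

lemma kerP_diff {a : ℂ} (ha : ‖a‖ < 1) : DifferentiableOn ℂ (kerP a) (ball (0:ℂ) 1) := by
  apply DifferentiableOn.inv
  · fun_prop
  · intro z hz
    exact denomP_ne ha (le_of_lt (by simpa [mem_ball, Complex.dist_eq] using hz))

lemma kerP_contAt {a z : ℂ} (ha : ‖a‖ < 1) (hz : ‖z‖ < 1) : ContinuousAt (kerP a) z := by
  have := (kerP_diff ha).differentiableAt (isOpen_ball.mem_nhds (by simpa [mem_ball, Complex.dist_eq] using hz))
  exact this.continuousAt

lemma reproP {r : ℝ} (hr0 : 0 < r) (hr1 : r < 1) {a : ℂ} (ha : ‖a‖ < 1)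
    {F : ℂ → ℂ} (hF : DifferentiableOn ℂ F (ball (0:ℂ) 1)) :
    ∫ t in (0:ℝ)..(2*π),
      (starRingEnd ℂ) (kerP a (circleMap 0 r t)) * F (circleMap 0 r t)
      = 2*π* F ((r:ℂ)^2 * a) := by
  have ha' : ‖a‖ < 1 := by exact ha
  have hd : DiffContOnCl ℂ F (ball (0:ℂ) r) := by
    constructor
    · exact hF.mono (ball_subset_ball hr1.le)
    · rw [closure_ball (0:ℂ) hr0.ne']
      exact hF.continuousOn.mono (closedBall_subset_ball hr1)
  have habsw : ‖(r:ℂ)^2 * a‖ < r := by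
    rw [norm_mul, norm_pow, Complex.norm_real, Real.norm_eq_abs]
    calc |r|^2 * ‖a‖ ≤ |r|^2 * 1 := by
          nlinarith [norm_nonneg a, ha', abs_nonneg r, sq_nonneg |r|]
      _ < r := by rw [abs_of_pos hr0]; nlinarith
  have hw : ((r:ℂ)^2 * a) ∈ ball (0:ℂ) r := by
    simpa [mem_ball, Complex.dist_eq] using habsw
  have key := hd.circleIntegral_sub_inv_smul hw
  rw [circleIntegral] at key
  have hptw : ∀ t : ℝ,
      deriv (circleMap 0 r) t • (((circleMap 0 r t) - ((r:ℂ)^2*a))⁻¹ • F (circleMap 0 r t))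
      = Complex.I * ((starRingEnd ℂ) (kerP a (circleMap 0 r t)) * F (circleMap 0 r t)) := by
    intro t
    set z := circleMap 0 r t with hzdef
    have hz0 : z ≠ 0 := circleMap_ne_center hr0.ne'
    have habs : ‖z‖ = r := by rw [hzdef, norm_circleMap_zero, abs_of_pos hr0]
    have hzz : z * (starRingEnd ℂ) z = (((r:ℝ)^2 : ℝ) : ℂ) := by
      rw [Complex.mul_conj]; norm_cast; rw [Complex.normSq_eq_norm_sq, habs]
    have hzle : ‖z‖ ≤ 1 := by rw [habs]; linarith
    have hsub : z - (r:ℂ)^2 * a ≠ 0 := by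
      intro h
      have h2 : z = (r:ℂ)^2 * a := by linear_combination h
      rw [← h2, habs] at habsw; linarith
    have hden2 : 1 - a * (starRingEnd ℂ) z ≠ 0 := by
      have := denomP_ne (a := (starRingEnd ℂ) a) (z := (starRingEnd ℂ) z)
        (by simpa using ha) (by simpa using hzle)
      simpa using this
    rw [deriv_circleMap, ← hzdef, smul_eq_mul, smul_eq_mul, kerP, map_inv₀]
    have hconj : (starRingEnd ℂ) (1 - (starRingEnd ℂ) a * z) = 1 - a * (starRingEnd ℂ) z := by
      simp [map_sub, map_mul]
    rw [hconj]
    push_cast at hzz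
    field_simp
    linear_combination (-(F z * a)) * hzz
  rw [intervalIntegral.integral_congr (g := fun t => Complex.I * ((starRingEnd ℂ) (kerP a (circleMap 0 r t)) * F (circleMap 0 r t))) (fun t _ => hptw t)] at key
  rw [intervalIntegral.integral_const_mul, smul_eq_mul] at key
  have hI : (Complex.I : ℂ) ≠ 0 := Complex.I_ne_zero
  refine mul_left_cancel₀ hI (key.trans ?_)
  ring

lemma contCirc {r : ℝ} (hr0 : 0 < r) (hr1 : r < 1) {F : ℂ → ℂ}
    (hF : DifferentiableOn ℂ F (ball (0:ℂ) 1)) :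
    Continuous (fun t : ℝ => F (circleMap 0 r t)) := by
  rw [continuous_iff_continuousAt]
  intro t
  have hmem : circleMap 0 r t ∈ ball (0:ℂ) 1 := by
    simp [mem_ball, Complex.dist_eq, norm_circleMap_zero, abs_of_pos hr0, hr1]
  exact ((hF.differentiableAt (isOpen_ball.mem_nhds hmem)).continuousAt).comp
    (continuous_circleMap 0 r).continuousAt

lemma intervalIntegral_conj {f : ℝ → ℂ} {a b : ℝ} :
    ∫ t in a..b, (starRingEnd ℂ) (f t) = (starRingEnd ℂ) (∫ t in a..b, f t) := by
  simp [intervalIntegral, integral_conj, map_sub]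

lemma reproP_sum {r : ℝ} (hr0 : 0 < r) (hr1 : r < 1) {m : ℕ} (lam : Fin m → ℂ)
    (hlam : ∀ i, ‖lam i‖ < 1) (c : Fin m → ℂ) {F : ℂ → ℂ}
    (hF : DifferentiableOn ℂ F (ball (0:ℂ) 1)) :
    ∫ t in (0:ℝ)..(2*π),
      (starRingEnd ℂ) (∑ j, c j * kerP (lam j) (circleMap 0 r t)) * F (circleMap 0 r t)
      = 2*π * ∑ j, (starRingEnd ℂ) (c j) * F ((r:ℂ)^2 * lam j) := by
  have hptw : ∀ t : ℝ,
      (starRingEnd ℂ) (∑ j, c j * kerP (lam j) (circleMap 0 r t)) * F (circleMap 0 r t)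
      = ∑ j, (starRingEnd ℂ) (c j) *
          ((starRingEnd ℂ) (kerP (lam j) (circleMap 0 r t)) * F (circleMap 0 r t)) := by
    intro t
    rw [map_sum, Finset.sum_mul]
    exact Finset.sum_congr rfl fun j _ => by rw [map_mul]; ring
  rw [intervalIntegral.integral_congr (fun t _ => hptw t)]
  rw [intervalIntegral.integral_finset_sum]
  · rw [Finset.mul_sum]
    refine Finset.sum_congr rfl fun j _ => ?_
    rw [intervalIntegral.integral_const_mul, reproP hr0 hr1 (hlam j) hF]
    ring
  · intro j _
    apply Continuous.intervalIntegrable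
    exact continuous_const.mul ((Complex.continuous_conj.comp
      (contCirc hr0 hr1 (kerP_diff (hlam j)))).mul (contCirc hr0 hr1 hF))

noncomputable def gP {m : ℕ} (lam c : Fin m → ℂ) : ℂ → ℂ :=
  fun z => ∑ j, (starRingEnd ℂ) (c j) * kerP (lam j) z

lemma gP_diff {m : ℕ} {lam : Fin m → ℂ} (hlam : ∀ i, ‖lam i‖ < 1) (c : Fin m → ℂ) :
    DifferentiableOn ℂ (gP lam c) (ball (0:ℂ) 1) := by
  apply DifferentiableOn.fun_sum
  intro j _
  exact (kerP_diff (hlam j)).const_mul _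

lemma gP_contAt {m : ℕ} {lam : Fin m → ℂ} (hlam : ∀ i, ‖lam i‖ < 1) (c : Fin m → ℂ)
    {a : ℂ} (ha : ‖a‖ < 1) : ContinuousAt (gP lam c) a :=
  ((gP_diff hlam c).differentiableAt (isOpen_ball.mem_nhds
    (by simpa [mem_ball, Complex.dist_eq] using ha))).continuousAt

lemma gP_repro {r : ℝ} (hr0 : 0 < r) (hr1 : r < 1) {m : ℕ} {lam : Fin m → ℂ}
    (hlam : ∀ i, ‖lam i‖ < 1) (c : Fin m → ℂ) {F : ℂ → ℂ}
    (hF : DifferentiableOn ℂ F (ball (0:ℂ) 1)) :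
    ∫ t in (0:ℝ)..(2*π),
      (starRingEnd ℂ) (gP lam c (circleMap 0 r t)) * F (circleMap 0 r t)
      = 2*π * ∑ j, c j * F ((r:ℂ)^2 * lam j) := by
  have := reproP_sum hr0 hr1 lam hlam (fun j => (starRingEnd ℂ) (c j)) hF
  simpa [gP, Complex.conj_conj] using this

lemma key_r {m : ℕ} (lam mu x : Fin m → ℂ) (hlam : ∀ i, ‖lam i‖ < 1)
    (H : ℂ → ℂ) (hH : DifferentiableOn ℂ H (ball (0:ℂ) 1))
    (hH1 : ∀ z ∈ ball (0:ℂ) 1, ‖H z‖ ≤ 1)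
    {r : ℝ} (hr0 : 0 < r) (hr1 : r < 1) :
    0 ≤ (∑ i, (x i * mu i) * gP lam (fun j => x j * mu j) ((r:ℂ)^2 * lam i)).re
        - 2 * (∑ i, x i * (H ((r:ℂ)^2*lam i) * gP lam (fun j => x j * mu j) ((r:ℂ)^2*lam i))).re
        + (∑ i, x i * gP lam x ((r:ℂ)^2*lam i)).re := by
  have hdiff : DifferentiableOn ℂ (gP lam (fun j => x j * mu j)) (ball (0:ℂ) 1) :=
    gP_diff hlam _
  have gdiff : DifferentiableOn ℂ (gP lam x) (ball (0:ℂ) 1) := gP_diff hlam _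
  have hHh : DifferentiableOn ℂ (fun z => H z * gP lam (fun j => x j * mu j) z)
      (ball (0:ℂ) 1) := hH.mul hdiff
  have A := gP_repro hr0 hr1 hlam x
    (F := fun z => H z * gP lam (fun j => x j * mu j) z) hHh
  have B := gP_repro hr0 hr1 hlam (fun j => x j * mu j)
    (F := gP lam (fun j => x j * mu j)) hdiff
  have Cq := gP_repro hr0 hr1 hlam x (F := gP lam x) gdiff
  beta_reduce at A B Cq
  set h : ℂ → ℂ := gP lam (fun j => x j * mu j) with hhdef
  set g : ℂ → ℂ := gP lam x with hgdef
  have cH : Continuous fun t => H (circleMap 0 r t) := contCirc hr0 hr1 hH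
  have ch : Continuous fun t => h (circleMap 0 r t) := contCirc hr0 hr1 hdiff
  have cg : Continuous fun t => g (circleMap 0 r t) := contCirc hr0 hr1 gdiff
  have cu : Continuous fun t => H (circleMap 0 r t) * h (circleMap 0 r t) := cH.mul ch
  have pi0 : (0:ℝ) ≤ 2*π := by positivity
  -- real integral of |h|^2
  have hBre : ∫ t in (0:ℝ)..(2*π), Complex.normSq (h (circleMap 0 r t))
      = (2*(π:ℂ)*∑ j, (x j * mu j) * h ((r:ℂ)^2 * lam j)).re := by
    have h1 : (((∫ t in (0:ℝ)..(2*π), Complex.normSq (h (circleMap 0 r t))) : ℝ) : ℂ)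
        = ∫ t in (0:ℝ)..(2*π),
            (starRingEnd ℂ) (h (circleMap 0 r t)) * h (circleMap 0 r t) := by
      rw [← intervalIntegral.integral_ofReal]
      apply intervalIntegral.integral_congr
      intro t _
      beta_reduce
      rw [mul_comm, Complex.mul_conj]
    have h2 := congrArg Complex.re (h1.trans B)
    simpa using h2
  have hCre : ∫ t in (0:ℝ)..(2*π), Complex.normSq (g (circleMap 0 r t))
      = (2*(π:ℂ)*∑ j, x j * g ((r:ℂ)^2 * lam j)).re := by
    have h1 : (((∫ t in (0:ℝ)..(2*π), Complex.normSq (g (circleMap 0 r t))) : ℝ) : ℂ)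
        = ∫ t in (0:ℝ)..(2*π),
            (starRingEnd ℂ) (g (circleMap 0 r t)) * g (circleMap 0 r t) := by
      rw [← intervalIntegral.integral_ofReal]
      apply intervalIntegral.integral_congr
      intro t _
      beta_reduce
      rw [mul_comm, Complex.mul_conj]
    have h2 := congrArg Complex.re (h1.trans Cq)
    simpa using h2
  -- expansion of |Hh - g|^2
  have c1 : Continuous fun t : ℝ =>
      ((Complex.normSq (H (circleMap 0 r t) * h (circleMap 0 r t)) : ℝ) : ℂ) :=
    Complex.continuous_ofReal.comp (Complex.continuous_normSq.comp cu)
  have c2 : Continuous fun t : ℝ =>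
      (starRingEnd ℂ) (g (circleMap 0 r t)) * (H (circleMap 0 r t) * h (circleMap 0 r t)) :=
    (Complex.continuous_conj.comp cg).mul cu
  have c3 : Continuous fun t : ℝ =>
      (starRingEnd ℂ) ((starRingEnd ℂ) (g (circleMap 0 r t)) *
        (H (circleMap 0 r t) * h (circleMap 0 r t))) :=
    Complex.continuous_conj.comp c2
  have c4 : Continuous fun t : ℝ =>
      ((Complex.normSq (g (circleMap 0 r t)) : ℝ) : ℂ) :=
    Complex.continuous_ofReal.comp (Complex.continuous_normSq.comp cg)
  have hsplit : (((∫ t in (0:ℝ)..(2*π),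
        Complex.normSq (H (circleMap 0 r t) * h (circleMap 0 r t) - g (circleMap 0 r t))) : ℝ) : ℂ)
      = (((∫ t in (0:ℝ)..(2*π),
          Complex.normSq (H (circleMap 0 r t) * h (circleMap 0 r t))) : ℝ) : ℂ)
        - (2*(π:ℂ)*∑ j, x j * (H ((r:ℂ)^2*lam j) * h ((r:ℂ)^2*lam j)))
        - (starRingEnd ℂ) (2*(π:ℂ)*∑ j, x j * (H ((r:ℂ)^2*lam j) * h ((r:ℂ)^2*lam j)))
        + (((∫ t in (0:ℝ)..(2*π), Complex.normSq (g (circleMap 0 r t))) : ℝ) : ℂ) := by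
    rw [← A, ← intervalIntegral_conj, ← intervalIntegral.integral_ofReal,
      ← intervalIntegral.integral_ofReal, ← intervalIntegral.integral_ofReal]
    rw [← intervalIntegral.integral_sub (c1.intervalIntegrable _ _) (c2.intervalIntegrable _ _),
      ← intervalIntegral.integral_sub ((c1.fun_sub c2).intervalIntegrable _ _)
        (c3.intervalIntegrable _ _),
      ← intervalIntegral.integral_add (((c1.fun_sub c2).fun_sub c3).intervalIntegrable _ _)
        (c4.intervalIntegrable _ _)]
    apply intervalIntegral.integral_congr
    intro t _
    beta_reduce
    rw [← Complex.mul_conj, ← Complex.mul_conj, ← Complex.mul_conj]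
    simp only [map_sub, map_mul, Complex.conj_conj]
    ring
  have hexp : ∫ t in (0:ℝ)..(2*π),
        Complex.normSq (H (circleMap 0 r t) * h (circleMap 0 r t) - g (circleMap 0 r t))
      = (∫ t in (0:ℝ)..(2*π),
          Complex.normSq (H (circleMap 0 r t) * h (circleMap 0 r t)))
        - 2*(2*(π:ℂ)*∑ j, x j * (H ((r:ℂ)^2*lam j) * h ((r:ℂ)^2*lam j))).re
        + ∫ t in (0:ℝ)..(2*π), Complex.normSq (g (circleMap 0 r t)) := by
    have h2 := congrArg Complex.re hsplit
    simp only [Complex.sub_re, Complex.add_re, Complex.conj_re, Complex.ofReal_re] at h2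
    rw [h2]; ring
  -- contraction
  have hcontr : ∫ t in (0:ℝ)..(2*π),
        Complex.normSq (H (circleMap 0 r t) * h (circleMap 0 r t))
      ≤ ∫ t in (0:ℝ)..(2*π), Complex.normSq (h (circleMap 0 r t)) := by
    apply intervalIntegral.integral_mono_on pi0
      ((Complex.continuous_normSq.comp cu).intervalIntegrable _ _)
      ((Complex.continuous_normSq.comp ch).intervalIntegrable _ _)
    intro t _
    show Complex.normSq (H (circleMap 0 r t) * h (circleMap 0 r t))
      ≤ Complex.normSq (h (circleMap 0 r t))
    have hmem : circleMap 0 r t ∈ ball (0:ℂ) 1 := by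
      simp [mem_ball, Complex.dist_eq, norm_circleMap_zero, abs_of_pos hr0, hr1]
    have hb := hH1 _ hmem
    have h2 : Complex.normSq (H (circleMap 0 r t)) ≤ 1 := by
      rw [Complex.normSq_eq_norm_sq]
      nlinarith [norm_nonneg (H (circleMap 0 r t))]
    rw [Complex.normSq_mul]
    nlinarith [Complex.normSq_nonneg (h (circleMap 0 r t)),
      Complex.normSq_nonneg (H (circleMap 0 r t))]
  -- nonnegativity
  have h0 : 0 ≤ ∫ t in (0:ℝ)..(2*π),
      Complex.normSq (H (circleMap 0 r t) * h (circleMap 0 r t) - g (circleMap 0 r t)) :=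
    intervalIntegral.integral_nonneg pi0 (fun t _ => Complex.normSq_nonneg _)
  -- combine
  have hfin : 0 ≤ (2*(π:ℂ)*∑ j, (x j * mu j) * h ((r:ℂ)^2 * lam j)).re
      - 2*(2*(π:ℂ)*∑ j, x j * (H ((r:ℂ)^2*lam j) * h ((r:ℂ)^2*lam j))).re
      + (2*(π:ℂ)*∑ j, x j * g ((r:ℂ)^2 * lam j)).re := by
    rw [← hBre, ← hCre]
    linarith [hexp, hcontr, h0]
  have hre : ∀ w : ℂ, (2*(π:ℂ)*w).re = 2*π*w.re := by
    intro w
    rw [show (2*(π:ℂ)) = ((2*π:ℝ):ℂ) by push_cast; ring, Complex.re_ofReal_mul]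
  rw [hre, hre, hre] at hfin
  nlinarith [Real.pi_pos]

lemma main_ineq {m : ℕ} (lam mu x : Fin m → ℂ) (hlam : ∀ i, ‖lam i‖ < 1)
    (H : ℂ → ℂ) (hH : DifferentiableOn ℂ H (ball (0:ℂ) 1))
    (hH1 : ∀ z ∈ ball (0:ℂ) 1, ‖H z‖ ≤ 1)
    (hint : ∀ j, H (lam j) = mu j) :
    0 ≤ (∑ i, x i * gP lam x (lam i)).re
        - (∑ i, (x i * mu i) * gP lam (fun j => x j * mu j) (lam i)).re := by
  set l : Filter ℝ := nhdsWithin 1 (Set.Ioo (0:ℝ) 1) with hl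
  haveI : l.NeBot := right_nhdsWithin_Ioo_neBot (by norm_num)
  set h : ℂ → ℂ := gP lam (fun j => x j * mu j) with hhdef
  set g : ℂ → ℂ := gP lam x with hgdef
  have tlam : ∀ i : Fin m, Filter.Tendsto (fun r : ℝ => ((r:ℂ)^2 * lam i)) l (𝓝 (lam i)) := by
    intro i
    have hc : Continuous fun r : ℝ => ((r:ℂ)^2 * lam i) := by continuity
    have h1 : Filter.Tendsto (fun r : ℝ => ((r:ℂ)^2 * lam i)) l (𝓝 (((1:ℝ):ℂ)^2 * lam i)) :=
      (hc.tendsto 1).mono_left nhdsWithin_le_nhds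
    simpa using h1
  have th : ∀ i, Filter.Tendsto (fun r : ℝ => h ((r:ℂ)^2*lam i)) l (𝓝 (h (lam i))) :=
    fun i => (gP_contAt hlam _ (hlam i)).tendsto.comp (tlam i)
  have tg : ∀ i, Filter.Tendsto (fun r : ℝ => g ((r:ℂ)^2*lam i)) l (𝓝 (g (lam i))) :=
    fun i => (gP_contAt hlam _ (hlam i)).tendsto.comp (tlam i)
  have tH : ∀ i, Filter.Tendsto (fun r : ℝ => H ((r:ℂ)^2*lam i)) l (𝓝 (mu i)) := by
    intro i
    have hc : ContinuousAt H (lam i) :=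
      (hH.differentiableAt (isOpen_ball.mem_nhds
        (by simpa [mem_ball, Complex.dist_eq] using hlam i))).continuousAt
    have := hc.tendsto.comp (tlam i)
    rwa [hint i] at this
  have tφ : Filter.Tendsto (fun r : ℝ =>
      (∑ i, (x i * mu i) * h ((r:ℂ)^2*lam i)).re
      - 2*(∑ i, x i * (H ((r:ℂ)^2*lam i) * h ((r:ℂ)^2*lam i))).re
      + (∑ i, x i * g ((r:ℂ)^2*lam i)).re) l
      (𝓝 ((∑ i, (x i * mu i) * h (lam i)).re
        - 2*(∑ i, x i * (mu i * h (lam i))).re + (∑ i, x i * g (lam i)).re)) := by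
    refine Filter.Tendsto.add (Filter.Tendsto.sub ?_ ?_) ?_
    · exact (Complex.continuous_re.tendsto _).comp
        (tendsto_finset_sum _ fun i _ => (th i).const_mul _)
    · exact Filter.Tendsto.const_mul 2 ((Complex.continuous_re.tendsto _).comp
        (tendsto_finset_sum _ fun i _ => ((tH i).mul (th i)).const_mul _))
    · exact (Complex.continuous_re.tendsto _).comp
        (tendsto_finset_sum _ fun i _ => (tg i).const_mul _)
  have hev : ∀ᶠ r : ℝ in l, 0 ≤
      (∑ i, (x i * mu i) * h ((r:ℂ)^2*lam i)).re
      - 2*(∑ i, x i * (H ((r:ℂ)^2*lam i) * h ((r:ℂ)^2*lam i))).re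
      + (∑ i, x i * g ((r:ℂ)^2*lam i)).re := by
    filter_upwards [self_mem_nhdsWithin] with r hr
    exact key_r lam mu x hlam H hH hH1 hr.1 hr.2
  have hlim := ge_of_tendsto tφ hev
  have heq : (∑ i, x i * (mu i * h (lam i))) = ∑ i, (x i * mu i) * h (lam i) :=
    Finset.sum_congr rfl fun i _ => by ring
  rw [heq] at hlim
  linarith


/-- necessity of the Pick condition: if `H ∈ H^∞` with
`‖H‖_{H^∞} ≤ 1` interpolates `H(λ j) = μ j` at points `λ j` of the unit disc,
then the Pick matrix `[(1 - conj(μ i) μ j)/(1 - λ j conj(λ i))]` is positive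
semidefinite. -/
theorem stmt_18 (n : ℕ) (lam mu : Fin n → ℂ) (hlam : ∀ i, ‖lam i‖ < 1)
    (H : ℂ → ℂ) (hH : DifferentiableOn ℂ H (ball (0 : ℂ) 1))
    (hH1 : ∀ z ∈ ball (0 : ℂ) 1, ‖H z‖ ≤ 1)
    (hint : ∀ j, H (lam j) = mu j) :
    (Matrix.of fun i j : Fin n =>
      (1 - starRingEnd ℂ (mu i) * mu j) /
        (1 - lam j * starRingEnd ℂ (lam i))).PosSemidef := by
  rw [Matrix.posSemidef_iff_dotProduct_mulVec]
  constructor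
  · -- Hermitian
    ext i j
    simp only [Matrix.conjTranspose_apply, Matrix.of_apply, RCLike.star_def, map_div₀,
      map_sub, map_one, map_mul, Complex.conj_conj]
    congr 1 <;> ring
  · intro x
    have key := main_ineq lam mu x hlam H hH hH1 hint
    have hform : dotProduct (star x) (Matrix.mulVec (Matrix.of fun i j : Fin n =>
        (1 - starRingEnd ℂ (mu i) * mu j) /
          (1 - lam j * starRingEnd ℂ (lam i))) x)
        = ∑ i, ∑ j, (starRingEnd ℂ) (x i) * x j *
            ((1 - starRingEnd ℂ (mu i) * mu j) / (1 - lam j * starRingEnd ℂ (lam i))) := by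
      simp only [dotProduct, Matrix.mulVec, Pi.star_apply, Matrix.of_apply,
        RCLike.star_def, Finset.mul_sum]
      refine Finset.sum_congr rfl fun i _ => Finset.sum_congr rfl fun j _ => by ring
    have hQd : (∑ i, ∑ j, (starRingEnd ℂ) (x i) * x j *
          ((1 - starRingEnd ℂ (mu i) * mu j) / (1 - lam j * starRingEnd ℂ (lam i))))
        = (∑ i, x i * gP lam x (lam i))
          - (∑ i, (x i * mu i) * gP lam (fun j => x j * mu j) (lam i)) := by
      rw [Finset.sum_comm, ← Finset.sum_sub_distrib]
      refine Finset.sum_congr rfl fun i _ => ?_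
      simp only [gP, kerP, Finset.mul_sum, ← Finset.sum_sub_distrib, map_mul]
      refine Finset.sum_congr rfl fun j _ => ?_
      ring
    have hconjQ : (starRingEnd ℂ) (∑ i, ∑ j, (starRingEnd ℂ) (x i) * x j *
          ((1 - starRingEnd ℂ (mu i) * mu j) / (1 - lam j * starRingEnd ℂ (lam i))))
        = ∑ i, ∑ j, (starRingEnd ℂ) (x i) * x j *
          ((1 - starRingEnd ℂ (mu i) * mu j) / (1 - lam j * starRingEnd ℂ (lam i))) := by
      rw [map_sum, Finset.sum_comm]
      refine Finset.sum_congr rfl fun i _ => ?_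
      rw [map_sum]
      refine Finset.sum_congr rfl fun j _ => ?_
      simp only [map_mul, map_div₀, map_sub, map_one, Complex.conj_conj]
      ring
    show (0:ℂ) ≤ dotProduct (star x) _
    rw [hform]
    rw [Complex.le_def]
    constructor
    · simp only [Complex.zero_re]
      rw [hQd, Complex.sub_re]
      linarith
    · simp only [Complex.zero_im]
      exact (Complex.conj_eq_iff_im.mp hconjQ).symm
end
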